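/- arXiv:1103.3027 — 4 statements merged into one kernel-verified Lean document; each statement's English description precedes it below -/
import Mathlib

section
/- The sequence u_n = 2·∫₀^{1/n} (sin(nπy)/sin(πy))² · y dy is non-increasing in n. -/
open Real intervalIntegral MeasureTheory

/-- `u_n = 2 ∫₀^{1/n} (sin(nπy)/sin(πy))² y dy`. -/
noncomputable def fejerIntegral (n : ℕ) : ℝ :=
  2 * ∫ y in (0:ℝ)..(1 / n), (Real.sin (n * π * y) / Real.sin (π * y)) ^ 2 * y

/-- `|sin (n θ)| ≤ n |sin θ|`. -/
lemma abs_sin_nat_mul_le (n : ℕ) (θ : ℝ) : |Real.sin (n * θ)| ≤ n * |Real.sin θ| := by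
  induction n with
  | zero => simp
  | succ k ih =>
    have h : ((k : ℝ) + 1) * θ = k * θ + θ := by ring
    push_cast
    rw [h, Real.sin_add]
    calc |Real.sin (k * θ) * Real.cos θ + Real.cos (k * θ) * Real.sin θ|
        ≤ |Real.sin (k * θ) * Real.cos θ| + |Real.cos (k * θ) * Real.sin θ| := abs_add_le _ _
      _ ≤ |Real.sin (k * θ)| * 1 + 1 * |Real.sin θ| := by
          rw [abs_mul, abs_mul]
          gcongr
          · exact Real.abs_cos_le_one θ
          · exact Real.abs_cos_le_one _
      _ ≤ (k : ℝ) * |Real.sin θ| + 1 * |Real.sin θ| := by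
          nlinarith [abs_nonneg (Real.sin θ)]
      _ = ((k : ℝ) + 1) * |Real.sin θ| := by ring

/-- From concavity of `sin` on `[0, π]`: `a sin b ≤ b sin a` for `0 ≤ a ≤ b ≤ π`. -/
lemma mul_sin_le_sin (a b : ℝ) (ha : 0 ≤ a) (hab : a ≤ b) (hb : b ≤ π) :
    a * Real.sin b ≤ b * Real.sin a := by
  rcases eq_or_lt_of_le ha with h0 | h0
  · simp [← h0]
  rcases eq_or_lt_of_le hab with h1 | h1
  · rw [h1]
  have hb0 : 0 < b := h0.trans h1
  have hconc := strictConcaveOn_sin_Icc.concaveOn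
  have hmem0 : (0 : ℝ) ∈ Set.Icc 0 π := ⟨le_rfl, Real.pi_pos.le⟩
  have hmemb : b ∈ Set.Icc 0 π := ⟨hb0.le, hb⟩
  have hw1 : (0:ℝ) ≤ 1 - a / b := by
    have : a / b ≤ 1 := (div_le_one hb0).2 hab
    linarith
  have hw2 : (0:ℝ) ≤ a / b := by positivity
  have h := hconc.2 hmem0 hmemb hw1 hw2 (by ring)
  simp only [smul_eq_mul, mul_zero, Real.sin_zero, zero_add] at h
  rw [div_mul_cancel₀ _ hb0.ne'] at h
  have h' : a / b * Real.sin b ≤ Real.sin a := by linarith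
  rw [div_mul_eq_mul_div, div_le_iff₀ hb0] at h'
  linarith

/-- The comparable integrand after the substitution `y = x / n`. -/
noncomputable def fejerH (n : ℕ) (x : ℝ) : ℝ :=
  (Real.sin (π * x)) ^ 2 * x / ((n : ℝ) * Real.sin (π * x / n)) ^ 2

lemma fejerH_eq (n : ℕ) (hn : 1 ≤ n) (x : ℝ) :
    fejerH n x =
      (1 / (n : ℝ)) *
        ((Real.sin ((n : ℝ) * π * (x / n)) / Real.sin (π * (x / n))) ^ 2 * (x / n)) := by
  have hn0 : (0:ℝ) < n := by exact_mod_cast hn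
  have harg : (n : ℝ) * π * (x / n) = π * x := by field_simp
  rw [harg]
  have harg2 : π * x / (n:ℝ) = π * (x / n) := by ring
  by_cases hs : Real.sin (π * (x / n)) = 0
  · have hs' : Real.sin (π * x / (n:ℝ)) = 0 := by rw [harg2]; exact hs
    simp [fejerH, hs, hs', mul_div_assoc]
  · rw [fejerH, harg2]
    field_simp

lemma fejerIntegral_eq (n : ℕ) (hn : 1 ≤ n) :
    fejerIntegral n = 2 * ∫ x in (0:ℝ)..1, fejerH n x := by
  have hn0 : (n : ℝ) ≠ 0 := by positivity
  rw [fejerIntegral]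
  congr 1
  rw [intervalIntegral.integral_congr (g := fun x =>
      (1 / (n : ℝ)) * ((Real.sin ((n : ℝ) * π * (x / n)) / Real.sin (π * (x / n))) ^ 2 * (x / n)))
      (fun x _ => fejerH_eq n hn x)]
  rw [intervalIntegral.integral_const_mul]
  rw [intervalIntegral.integral_comp_div
      (f := fun y => (Real.sin ((n : ℝ) * π * y) / Real.sin (π * y)) ^ 2 * y) hn0]
  rw [smul_eq_mul, zero_div]
  field_simp

lemma fejerH_bound (n : ℕ) (hn : 1 ≤ n) {x : ℝ} (hx : x ∈ Set.Icc (0:ℝ) 1) :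
    ‖fejerH n x‖ ≤ 1 := by
  obtain ⟨hx0, hx1⟩ := hx
  have hn0 : (0:ℝ) < n := by exact_mod_cast hn
  have hkey : |Real.sin (π * x)| ≤ (n : ℝ) * |Real.sin (π * x / n)| := by
    have := abs_sin_nat_mul_le n (π * x / n)
    rwa [show (n : ℝ) * (π * x / n) = π * x by field_simp] at this
  rw [fejerH, Real.norm_eq_abs]
  by_cases hs : Real.sin (π * x / n) = 0
  · have h0 : |Real.sin (π * x)| = 0 :=
      le_antisymm (by simpa [hs] using hkey) (abs_nonneg _)
    rw [abs_eq_zero] at h0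
    simp [h0]
  · have hden : (0:ℝ) < ((n : ℝ) * Real.sin (π * x / n)) ^ 2 := by positivity
    have hnum : (Real.sin (π * x)) ^ 2 * x ≤ ((n : ℝ) * Real.sin (π * x / n)) ^ 2 := by
      have h1 : (Real.sin (π * x)) ^ 2 ≤ ((n : ℝ) * |Real.sin (π * x / n)|) ^ 2 := by
        rw [← sq_abs (Real.sin (π * x))]
        exact pow_le_pow_left₀ (abs_nonneg _) hkey 2
      have h2 : ((n : ℝ) * |Real.sin (π * x / n)|) ^ 2
          = ((n : ℝ) * Real.sin (π * x / n)) ^ 2 := by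
        rw [mul_pow, mul_pow, sq_abs]
      nlinarith [sq_nonneg (Real.sin (π * x))]
    rw [abs_of_nonneg (by positivity)]
    exact div_le_one_of_le₀ hnum hden.le

lemma fejerH_integrable (n : ℕ) (hn : 1 ≤ n) :
    IntervalIntegrable (fejerH n) volume 0 1 := by
  rw [intervalIntegrable_iff]
  apply Measure.integrableOn_of_bounded (M := 1)
  · rw [Set.uIoc_of_le (by norm_num : (0:ℝ) ≤ 1)]
    exact (measure_Ioc_lt_top).ne
  · apply Measurable.aestronglyMeasurable
    unfold fejerH
    fun_prop
  · rw [Set.uIoc_of_le (by norm_num : (0:ℝ) ≤ 1)]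
    refine (ae_restrict_iff' measurableSet_Ioc).2 (Filter.Eventually.of_forall fun x hx => ?_)
    exact fejerH_bound n hn ⟨hx.1.le, hx.2⟩

lemma fejerH_mono (m n : ℕ) (hm : 1 ≤ m) (hmn : m ≤ n) {x : ℝ}
    (hx : x ∈ Set.Icc (0:ℝ) 1) : fejerH n x ≤ fejerH m x := by
  obtain ⟨hx0, hx1⟩ := hx
  have hm0 : (0:ℝ) < m := by exact_mod_cast hm
  have hn0 : (0:ℝ) < n := by exact_mod_cast hm.trans hmn
  have hmn' : (m:ℝ) ≤ n := by exact_mod_cast hmn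
  by_cases hs : Real.sin (π * x) = 0
  · simp [fejerH, hs]
  have hxpos : 0 < x := by
    rcases hx0.lt_or_eq with h | h
    · exact h
    · exfalso; apply hs; rw [← h]; simp
  have hsin_pos : ∀ k : ℕ, 1 ≤ k → 0 < Real.sin (π * x / k) := by
    intro k hk
    have hk0 : (0:ℝ) < k := by exact_mod_cast hk
    have hk1 : (1:ℝ) ≤ k := by exact_mod_cast hk
    have hle : π * x / k ≤ π := by
      rw [div_le_iff₀ hk0]
      nlinarith [Real.pi_pos]
    have hnn : 0 ≤ Real.sin (π * x / k) :=
      Real.sin_nonneg_of_nonneg_of_le_pi (by positivity) hle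
    rcases hnn.lt_or_eq with h | h
    · exact h
    · exfalso
      apply hs
      have := abs_sin_nat_mul_le k (π * x / k)
      rw [show (k : ℝ) * (π * x / k) = π * x by field_simp, ← h] at this
      have h0 : |Real.sin (π * x)| ≤ 0 := by simpa using this
      exact abs_eq_zero.mp (le_antisymm h0 (abs_nonneg _))
  have hA := hsin_pos n (hm.trans hmn)
  have hB := hsin_pos m hm
  have hab : π * x / n ≤ π * x / m := by gcongr
  have hm1 : (1:ℝ) ≤ m := by exact_mod_cast hm
  have hbpi : π * x / m ≤ π := by
    rw [div_le_iff₀ hm0]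
    nlinarith [Real.pi_pos]
  have h := mul_sin_le_sin (π * x / n) (π * x / m) (by positivity) hab hbpi
  rw [div_mul_eq_mul_div, div_mul_eq_mul_div, div_le_div_iff₀ hn0 hm0] at h
  have hkey : (m : ℝ) * Real.sin (π * x / m) ≤ (n : ℝ) * Real.sin (π * x / n) := by
    nlinarith [mul_pos Real.pi_pos hxpos]
  rw [fejerH, fejerH]
  apply div_le_div_of_nonneg_left (by positivity) (by positivity)
  exact pow_le_pow_left₀ (by positivity) hkey 2

/-- The sequence `u_n` is non-increasing in `n`. -/
theorem fejerIntegral_antitone (m n : ℕ) (hm : 1 ≤ m) (hmn : m ≤ n) :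
    fejerIntegral n ≤ fejerIntegral m := by
  rw [fejerIntegral_eq m hm, fejerIntegral_eq n (hm.trans hmn)]
  have := intervalIntegral.integral_mono_on (μ := volume) (by norm_num : (0:ℝ) ≤ 1)
    (fejerH_integrable n (hm.trans hmn)) (fejerH_integrable m hm)
    (fun x hx => fejerH_mono m n hm hmn hx)
  linarith
end

section
/- For 0 < s, s' and t, t' ∈ (0,1], the inequality φ_{s,t}(x) ≤ φ_{s',t'}(x) holds for all sufficiently small x > 0 if and only if s > s', or (s = s' and t ≥ t'). -/
open Real

/-- `φ_{s,t}(x) = x^s exp((log(1/x))^{1-t})`. -/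
noncomputable def phiGauge (s t x : ℝ) : ℝ :=
  x ^ s * Real.exp ((Real.log (1 / x)) ^ (1 - t))

lemma phiGauge_le_iff_aux (s s' t t' x : ℝ) (hx : 0 < x) :
    phiGauge s t x ≤ phiGauge s' t' x ↔
      (Real.log (1/x)) ^ (1 - t) - s * Real.log (1/x) ≤
        (Real.log (1/x)) ^ (1 - t') - s' * Real.log (1/x) := by
  unfold phiGauge
  rw [Real.rpow_def_of_pos hx, Real.rpow_def_of_pos hx, ← Real.exp_add, ← Real.exp_add,
    Real.exp_le_exp, one_div, Real.log_inv]
  constructor <;> intro h <;> linarith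

/-- For `s, s' > 0` and `t, t' ∈ (0,1]`, `φ_{s,t}(x) ≤ φ_{s',t'}(x)` for all sufficiently
small `x > 0` iff `s > s'` or (`s = s'` and `t ≥ t'`). -/
theorem phiGauge_le_iff (s s' t t' : ℝ) (hs : 0 < s) (hs' : 0 < s')
    (ht : t ∈ Set.Ioc (0:ℝ) 1) (ht' : t' ∈ Set.Ioc (0:ℝ) 1) :
    (∃ δ : ℝ, 0 < δ ∧ ∀ x : ℝ, 0 < x → x < δ → phiGauge s t x ≤ phiGauge s' t' x) ↔
      (s' < s ∨ (s = s' ∧ t' ≤ t)) := by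
  obtain ⟨ht0, ht1⟩ := ht
  obtain ⟨ht'0, ht'1⟩ := ht'
  constructor
  · rintro ⟨δ, hδ, h⟩
    by_contra hc
    push_neg at hc
    obtain ⟨h1, h2⟩ := hc
    rcases lt_or_eq_of_le h1 with hlt | heq
    · -- s < s' : contradiction for large L
      set c : ℝ := s' - s with hc
      have hc0 : 0 < c := by simp [hc]; linarith
      set L : ℝ := max (max 2 (c⁻¹ ^ t'⁻¹ + 1)) (Real.log (1/δ) + 1) with hL
      have hL2 : 2 ≤ L := le_trans (le_max_left _ _) (le_max_left _ _)
      have hL0 : 0 < L := by linarith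
      have hLc : c⁻¹ ^ t'⁻¹ < L :=
        lt_of_lt_of_le (by linarith [le_trans (le_max_right 2 (c⁻¹ ^ t'⁻¹ + 1)) (le_max_left _ (Real.log (1/δ) + 1))]) (le_refl L)
      have hLδ : Real.log (1/δ) < L := by
        have := le_max_right (max 2 (c⁻¹ ^ t'⁻¹ + 1)) (Real.log (1/δ) + 1)
        linarith
      set x : ℝ := Real.exp (-L) with hxdef
      have hx0 : 0 < x := Real.exp_pos _
      have hxδ : x < δ := by
        rw [hxdef]
        have : -L < Real.log δ := by
          rw [one_div, Real.log_inv] at hLδ; linarith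
        calc Real.exp (-L) < Real.exp (Real.log δ) := Real.exp_lt_exp.2 this
          _ = δ := Real.exp_log hδ
      have hlog : Real.log (1/x) = L := by
        rw [hxdef, one_div, ← Real.exp_neg, Real.log_exp, neg_neg]
      have hkey := (phiGauge_le_iff_aux s s' t t' x hx0).1 (h x hx0 hxδ)
      rw [hlog] at hkey
      -- hkey : L^(1-t) - s*L ≤ L^(1-t') - s'*L
      have hnn : (0:ℝ) ≤ L ^ (1-t) := Real.rpow_nonneg (le_of_lt hL0) _
      -- show c*L > L^(1-t')
      have ht'pow : c⁻¹ < L ^ t' := by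
        calc c⁻¹ = (c⁻¹ ^ t'⁻¹) ^ t' := (Real.rpow_inv_rpow (by positivity) (ne_of_gt ht'0)).symm
          _ < L ^ t' := Real.rpow_lt_rpow (by positivity) hLc ht'0
      have hsplit : L = L ^ t' * L ^ (1 - t') := by
        rw [← Real.rpow_add hL0, add_sub_cancel, Real.rpow_one]
      have hpos' : (0:ℝ) < L ^ (1 - t') := Real.rpow_pos_of_pos hL0 _
      have hcL : L ^ (1 - t') < c * L := by
        have h1' : 1 < c * L ^ t' := by
          rw [← inv_lt_iff_one_lt_mul₀' hc0] at *
          · exact ht'pow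
        calc L ^ (1 - t') = 1 * L ^ (1 - t') := (one_mul _).symm
          _ < (c * L ^ t') * L ^ (1 - t') := by
              exact mul_lt_mul_of_pos_right h1' hpos'
          _ = c * L := by rw [mul_assoc, ← hsplit]
      -- hkey gives c*L ≤ L^(1-t') - L^(1-t) ≤ L^(1-t')
      have : c * L ≤ L ^ (1 - t') := by
        have : c * L = s' * L - s * L := by ring
        linarith
      linarith
    · -- s = s', t < t'
      have htt' : t < t' := h2 heq
      set L : ℝ := max 2 (Real.log (1/δ) + 1) with hL
      have hL2 : 2 ≤ L := le_max_left _ _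
      have hL1 : 1 < L := by linarith
      have hL0 : 0 < L := by linarith
      have hLδ : Real.log (1/δ) < L := by
        have := le_max_right 2 (Real.log (1/δ) + 1); linarith
      set x : ℝ := Real.exp (-L) with hxdef
      have hx0 : 0 < x := Real.exp_pos _
      have hxδ : x < δ := by
        rw [hxdef]
        have : -L < Real.log δ := by
          rw [one_div, Real.log_inv] at hLδ; linarith
        calc Real.exp (-L) < Real.exp (Real.log δ) := Real.exp_lt_exp.2 this
          _ = δ := Real.exp_log hδ
      have hlog : Real.log (1/x) = L := by
        rw [hxdef, one_div, ← Real.exp_neg, Real.log_exp, neg_neg]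
      have hkey := (phiGauge_le_iff_aux s s' t t' x hx0).1 (h x hx0 hxδ)
      rw [hlog, ← heq] at hkey
      have : L ^ (1 - t') < L ^ (1 - t) :=
        (Real.rpow_lt_rpow_left_iff hL1).2 (by linarith)
      linarith
  · rintro (hlt | ⟨heq, hle⟩)
    · set c : ℝ := s - s' with hc
      have hc0 : 0 < c := by simp [hc]; linarith
      set M : ℝ := max 1 (c⁻¹ ^ t⁻¹) with hM
      refine ⟨Real.exp (-M), Real.exp_pos _, fun x hx0 hxδ => ?_⟩
      set L : ℝ := Real.log (1/x) with hLdef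
      have hLM : M < L := by
        have := Real.log_lt_log hx0 hxδ
        rw [Real.log_exp] at this
        rw [hLdef, one_div, Real.log_inv]; linarith
      have hM1 : (1:ℝ) ≤ M := le_max_left _ _
      have hL0 : 0 < L := by linarith
      rw [phiGauge_le_iff_aux s s' t t' x hx0, ← hLdef]
      have hnn : (0:ℝ) ≤ L ^ (1-t') := Real.rpow_nonneg (le_of_lt hL0) _
      have htpow : c⁻¹ < L ^ t := by
        calc c⁻¹ = (c⁻¹ ^ t⁻¹) ^ t := (Real.rpow_inv_rpow (by positivity) (ne_of_gt ht0)).symm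
          _ < L ^ t := Real.rpow_lt_rpow (by positivity)
              (lt_of_le_of_lt (le_max_right 1 _) hLM) ht0
      have hsplit : L = L ^ t * L ^ (1 - t) := by
        rw [← Real.rpow_add hL0, add_sub_cancel, Real.rpow_one]
      have hpos' : (0:ℝ) < L ^ (1 - t) := Real.rpow_pos_of_pos hL0 _
      have hcL : L ^ (1 - t) < c * L := by
        have h1' : 1 < c * L ^ t := by
          rw [← inv_lt_iff_one_lt_mul₀' hc0] at *
          · exact htpow
        calc L ^ (1 - t) = 1 * L ^ (1 - t) := (one_mul _).symm
          _ < (c * L ^ t) * L ^ (1 - t) := mul_lt_mul_of_pos_right h1' hpos'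
          _ = c * L := by rw [mul_assoc, ← hsplit]
      have : c * L = s * L - s' * L := by ring
      linarith
    · refine ⟨Real.exp (-1), Real.exp_pos _, fun x hx0 hxδ => ?_⟩
      set L : ℝ := Real.log (1/x) with hLdef
      have hL1 : 1 < L := by
        have := Real.log_lt_log hx0 hxδ
        rw [Real.log_exp] at this
        rw [hLdef, one_div, Real.log_inv]; linarith
      rw [phiGauge_le_iff_aux s s' t t' x hx0, ← hLdef, heq]
      have : L ^ (1 - t) ≤ L ^ (1 - t') :=
        (Real.rpow_le_rpow_left_iff hL1).2 (by linarith)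
      linarith
end

section
/- For 1 < p < ∞ and j ≥ 1, there exists a trigonometric polynomial g_j with spectrum in [0, j·2^{j+1}) such that ‖g_j‖_{L^p(𝕋)} ≤ 1 and for every 1 ≤ J ≤ j and every x within distance 2^{−j} of an odd multiple of 2^{−J}, there exist integers 0 ≤ n₁ < n₂ < j·2^{j+1} with |S_{n₂} g_j(x) − S_{n₁} g_j(x)| ≥ (1/(4j))·2^{−(J−j+1)/p}. -/
open Real Complex intervalIntegral

set_option maxHeartbeats 1000000
open Real Complex intervalIntegral

namespace SatPoly

/-- Length of the k-sum for scale `J` (for `1 ≤ J ≤ j`). -/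
def NN (j J : ℕ) : ℕ := 2 ^ (j - 1 - J)

/-- Dirichlet-type sum at scale J. -/
noncomputable def D (j J : ℕ) (x : ℝ) : ℂ :=
  ∑ k ∈ Finset.range (NN j J),
    Complex.exp (((2 * π * k * (2 ^ (J - 1) * x - 1/2) : ℝ)) * Complex.I)

noncomputable def gam (p : ℝ) (j J : ℕ) : ℝ :=
  (1 / j) * (2 : ℝ) ^ (((j : ℝ) - J - 1) / p) / NN j J

/-- frequency of the (J,k,l) term -/
def fr (j J : ℕ) (k l : ℕ) : ℤ := ((k : ℤ) - l) * 2 ^ (J - 1) + 2 ^ (j - 1)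

noncomputable def coef (p : ℝ) (j : ℕ) (m : ℤ) : ℂ :=
  ∑ J ∈ Finset.Icc 1 j, ∑ k ∈ Finset.range (NN j J), ∑ l ∈ Finset.range (NN j J),
    if m = fr j J k l then
      ((gam p j J / NN j J : ℝ) : ℂ) * Complex.exp (((-(π * ((k : ℝ) - l)) : ℝ)) * Complex.I)
    else 0

noncomputable def h (p : ℝ) (j : ℕ) (x : ℝ) : ℝ :=
  ∑ J ∈ Finset.Icc 1 j, (gam p j J / NN j J) * Complex.normSq (D j J x)

lemma fr_bounds {j J : ℕ} (hJ1 : 1 ≤ J) (hJj : J ≤ j) {k l : ℕ}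
    (hk : k ∈ Finset.range (NN j J)) (hl : l ∈ Finset.range (NN j J)) :
    1 ≤ fr j J k l ∧ fr j J k l ≤ 2 ^ j := by
  have hk' := Finset.mem_range.mp hk
  have hl' := Finset.mem_range.mp hl
  have hNpos : 0 < NN j J := Nat.pow_pos (by norm_num)
  have habs : |(k : ℤ) - l| ≤ (NN j J : ℤ) - 1 := by
    rw [abs_le]; omega
  have hN2 : (NN j J : ℤ) * 2 ^ (J - 1) ≤ 2 ^ (j - 1) := by
    have : (NN j J : ℤ) * 2 ^ (J - 1) = 2 ^ ((j - 1 - J) + (J - 1)) := by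
      rw [pow_add]; norm_num [NN]
    rw [this]
    exact pow_le_pow_right₀ (by norm_num) (by omega)
  have h2 : |(k : ℤ) - l| * 2 ^ (J - 1) ≤ 2 ^ (j - 1) - 2 ^ (J - 1) := by
    calc |(k : ℤ) - l| * 2 ^ (J - 1) ≤ ((NN j J : ℤ) - 1) * 2 ^ (J - 1) := by
          apply mul_le_mul_of_nonneg_right habs (by positivity)
      _ = (NN j J : ℤ) * 2 ^ (J - 1) - 2 ^ (J - 1) := by ring
      _ ≤ 2 ^ (j - 1) - 2 ^ (J - 1) := by omega
  have h3 : |((k : ℤ) - l) * 2 ^ (J - 1)| ≤ 2 ^ (j - 1) - 2 ^ (J - 1) := by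
    rw [abs_mul]
    simpa using h2
  have h4 : (1 : ℤ) ≤ 2 ^ (J - 1) := one_le_pow₀ (by norm_num)
  have h5 : (2 : ℤ) ^ (j - 1) + 2 ^ (j - 1) ≤ 2 ^ j := by
    have : (2 : ℤ) ^ (j - 1) + 2 ^ (j - 1) = 2 ^ ((j-1) + 1) := by ring
    rw [this]
    exact pow_le_pow_right₀ (by norm_num) (by omega)
  unfold fr
  constructor
  · nlinarith [abs_le.mp h3]
  · nlinarith [abs_le.mp h3]

lemma coef_eq_zero (p : ℝ) {j : ℕ} (hj : 1 ≤ j) {m : ℤ}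
    (hm : m < 0 ∨ (j * 2 ^ (j + 1) : ℤ) ≤ m) : coef p j m = 0 := by
  unfold coef
  apply Finset.sum_eq_zero; intro J hJ
  apply Finset.sum_eq_zero; intro k hk
  apply Finset.sum_eq_zero; intro l hl
  rw [if_neg]
  intro hcon
  obtain ⟨hJ1, hJj⟩ := Finset.mem_Icc.mp hJ
  obtain ⟨h1, h2⟩ := fr_bounds hJ1 hJj hk hl
  have h3 : (2 : ℤ) ^ j < j * 2 ^ (j + 1) := by
    have : (1 : ℤ) * 2 ^ j < j * 2 ^ (j + 1) := by
      apply mul_lt_mul' (by exact_mod_cast hj) (by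
        exact pow_lt_pow_right₀ (by norm_num) (by omega)) (by positivity) (by positivity)
    simpa using this
  omega

lemma sumA (p : ℝ) (j : ℕ) (S : Finset ℤ)
    (hS : ∀ J ∈ Finset.Icc 1 j, ∀ k ∈ Finset.range (NN j J), ∀ l ∈ Finset.range (NN j J),
      fr j J k l ∈ S) (x : ℝ) :
    ∑ m ∈ S, coef p j m * Complex.exp (2 * ↑π * Complex.I * m * x)
      = (h p j x : ℂ) * Complex.exp (((2 * π * 2 ^ (j - 1) * x : ℝ)) * Complex.I) := by
  have L : ∑ m ∈ S, coef p j m * Complex.exp (2 * ↑π * Complex.I * m * x)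
      = ∑ J ∈ Finset.Icc 1 j, ∑ k ∈ Finset.range (NN j J), ∑ l ∈ Finset.range (NN j J),
        (((gam p j J / NN j J : ℝ) : ℂ) * Complex.exp (((-(π * ((k : ℝ) - l)) : ℝ)) * Complex.I))
          * Complex.exp (2 * ↑π * Complex.I * (fr j J k l) * x) := by
    unfold coef
    simp only [Finset.sum_mul, ite_mul, zero_mul]
    rw [Finset.sum_comm]
    refine Finset.sum_congr rfl fun J hJ => ?_
    rw [Finset.sum_comm]
    refine Finset.sum_congr rfl fun k hk => ?_
    rw [Finset.sum_comm]
    refine Finset.sum_congr rfl fun l hl => ?_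
    rw [Finset.sum_ite_eq' S (fr j J k l), if_pos (hS J hJ k hk l hl)]
  rw [L]
  unfold h
  push_cast
  rw [Finset.sum_mul]
  refine Finset.sum_congr rfl fun J hJ => ?_
  rw [Finset.sum_comm]
  rw [← Complex.mul_conj]
  unfold D
  rw [map_sum]
  simp only [Finset.sum_mul, Finset.mul_sum]
  refine Finset.sum_congr rfl fun k hk => ?_
  refine Finset.sum_congr rfl fun l hl => ?_
  rw [← Complex.exp_conj, map_mul, Complex.conj_I, Complex.conj_ofReal]
  simp only [mul_assoc, ← Complex.exp_add]
  congr 1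
  push_cast [fr]
  ring

lemma sumsq_le (N : ℕ) : ∑ k ∈ Finset.range N, (k : ℝ) ^ 2 ≤ (N : ℝ) ^ 3 / 3 := by
  induction N with
  | zero => simp
  | succ n ih =>
    rw [Finset.sum_range_succ]
    push_cast
    nlinarith [ih, Nat.cast_nonneg (α := ℝ) n]

lemma re_D_ge {j J : ℕ} (hJ1 : 1 ≤ J) (hJj : J ≤ j) (K : ℤ) (hK : Odd K) (x : ℝ)
    (hx : |x - (K : ℝ) / 2 ^ J| ≤ 1 / 2 ^ j) : (NN j J : ℝ) / 2 ≤ (D j J x).re := by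
  obtain ⟨M, hM⟩ := hK
  set N := NN j J with hN
  set s : ℝ := 2 ^ (J - 1) * (x - (K : ℝ) / 2 ^ J) with hs
  have h2J : (2 : ℝ) ^ J = 2 * 2 ^ (J - 1) := by
    rw [← pow_succ']; congr 1; omega
  have hdecomp : (2 : ℝ) ^ (J - 1) * x - 1 / 2 = s + (M : ℝ) := by
    have hKr : (K : ℝ) = 2 * M + 1 := by exact_mod_cast hM
    rw [hs, hKr, h2J]
    field_simp
    ring
  have hre : (D j J x).re = ∑ k ∈ Finset.range N, Real.cos (2 * π * k * s) := by
    rw [D, Complex.re_sum]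
    refine Finset.sum_congr rfl fun k hk => ?_
    rw [Complex.exp_ofReal_mul_I_re, hdecomp]
    have : 2 * π * k * (s + (M : ℝ)) = 2 * π * k * s + ((k * M : ℤ) : ℝ) * (2 * π) := by
      push_cast; ring
    rw [this, Real.cos_add_int_mul_two_pi]
  rw [hre]
  have hcos : ∀ k ∈ Finset.range N, 1 - (2 * π * k * s) ^ 2 / 2 ≤ Real.cos (2 * π * k * s) :=
    fun k _ => Real.one_sub_sq_div_two_le_cos
  have hsum : (N : ℝ) - 2 * π ^ 2 * s ^ 2 * ((N : ℝ) ^ 3 / 3)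
      ≤ ∑ k ∈ Finset.range N, Real.cos (2 * π * k * s) := by
    calc (N : ℝ) - 2 * π ^ 2 * s ^ 2 * ((N : ℝ) ^ 3 / 3)
        ≤ (N : ℝ) - 2 * π ^ 2 * s ^ 2 * (∑ k ∈ Finset.range N, (k : ℝ) ^ 2) := by
          have := mul_le_mul_of_nonneg_left (sumsq_le N)
            (show (0:ℝ) ≤ 2 * π ^ 2 * s ^ 2 by positivity)
          linarith
      _ = ∑ k ∈ Finset.range N, (1 - (2 * π * k * s) ^ 2 / 2) := by
          rw [Finset.sum_sub_distrib, Finset.sum_const, Finset.card_range, nsmul_eq_mul,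
            mul_one, Finset.mul_sum]
          congr 1
          refine Finset.sum_congr rfl fun k _ => ?_
          ring
      _ ≤ _ := Finset.sum_le_sum hcos
  rcases eq_or_lt_of_le (Nat.one_le_iff_ne_zero.mpr (by
      simp [hN, NN, pow_ne_zero] : N ≠ 0) : 1 ≤ N) with h1 | h2
  · -- N = 1
    rw [← h1] at *
    simp only [Finset.sum_range_one]
    push_cast
    norm_num [Real.cos_zero]
  · -- N ≥ 2
    have hNlarge : 2 ≤ N := h2
    have hexp : 1 ≤ j - 1 - J := by
      by_contra hcon
      have : j - 1 - J = 0 := by omega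
      simp [hN, NN, this] at hNlarge
    have hNs : (N : ℝ) * |s| ≤ 1 / 4 := by
      have hsle : |s| ≤ 2 ^ (J - 1) / 2 ^ j := by
        rw [hs, abs_mul, _root_.abs_pow, _root_.abs_two]
        calc (2:ℝ) ^ (J-1) * |x - (K : ℝ) / 2 ^ J| ≤ 2 ^ (J-1) * (1 / 2 ^ j) := by
              apply mul_le_mul_of_nonneg_left hx (by positivity)
          _ = 2 ^ (J - 1) / 2 ^ j := by ring
      have hNr : (N : ℝ) = 2 ^ (j - 1 - J) := by rw [hN, NN]; push_cast; ring
      calc (N : ℝ) * |s| ≤ 2 ^ (j - 1 - J) * (2 ^ (J - 1) / 2 ^ j) := by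
            rw [hNr]; exact mul_le_mul_of_nonneg_left hsle (by positivity)
        _ = 2 ^ ((j - 1 - J) + (J - 1)) / 2 ^ j := by rw [pow_add]; ring
        _ = 2 ^ (j - 2) / 2 ^ j := by congr 2; omega
        _ = 1 / 4 := by
            have h4 : (2:ℝ) ^ (j - 2) * 2 ^ 2 = 2 ^ j := by
              rw [← pow_add]; congr 1; omega
            rw [div_eq_div_iff (by positivity) (by norm_num : (4:ℝ) ≠ 0)]
            norm_num at h4 ⊢
            linarith
    refine le_trans ?_ hsum
    have hπ : π ^ 2 ≤ 12 := by nlinarith [Real.pi_lt_d2, Real.pi_pos]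
    have hNpos : (0:ℝ) < N := by positivity
    have h16 : (N:ℝ)^2 * s^2 ≤ 1/16 := by
      nlinarith [mul_self_le_mul_self (by positivity : (0:ℝ) ≤ (N:ℝ) * |s|) hNs, _root_.sq_abs s]
    have key : 2*π^2*s^2*((N:ℝ)^3/3) ≤ (N:ℝ)/2 := by
      calc 2*π^2*s^2*((N:ℝ)^3/3) = (2*(N:ℝ)/3) * (π^2*(s^2*(N:ℝ)^2)) := by ring
        _ ≤ (2*(N:ℝ)/3) * (3/4) := by
            apply mul_le_mul_of_nonneg_left _ (by positivity)
            calc π^2*(s^2*(N:ℝ)^2) ≤ 12*(1/16) :=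
              mul_le_mul hπ (by rw [mul_comm]; exact h16) (by positivity) (by norm_num)
              _ ≤ 3/4 := by norm_num
        _ = (N:ℝ)/2 := by ring
    linarith


lemma gam_nonneg (p : ℝ) (j J : ℕ) : 0 ≤ gam p j J := by
  unfold gam
  positivity

lemma NN_pos (j J : ℕ) : 0 < NN j J := Nat.pow_pos (by norm_num)

lemma h_nonneg (p : ℝ) (j : ℕ) (x : ℝ) : 0 ≤ h p j x := by
  apply Finset.sum_nonneg
  intro J _
  have := gam_nonneg p j J
  have := Complex.normSq_nonneg (D j J x)
  positivity

lemma h_ge (p : ℝ) {j J : ℕ} (hJ1 : 1 ≤ J) (hJj : J ≤ j) (K : ℤ) (hK : Odd K) (x : ℝ)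
    (hx : |x - (K : ℝ) / 2 ^ J| ≤ 1 / 2 ^ j) :
    1 / (4 * (j:ℝ)) * (2:ℝ) ^ (-(((J:ℝ) - j + 1) / p)) ≤ h p j x := by
  have hre := re_D_ge hJ1 hJj K hK x hx
  set N := NN j J with hN
  have hNpos : (0:ℝ) < N := by exact_mod_cast NN_pos j J
  have hterm : gam p j J * (N:ℝ) / 4 ≤ (gam p j J / N) * Complex.normSq (D j J x) := by
    have hnsq : ((N:ℝ)/2)^2 ≤ Complex.normSq (D j J x) := by
      rw [Complex.normSq_apply]
      nlinarith [sq_nonneg (D j J x).im, hre, hNpos]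
    have := mul_le_mul_of_nonneg_left hnsq
      (div_nonneg (gam_nonneg p j J) hNpos.le)
    calc gam p j J * (N:ℝ) / 4 = (gam p j J / N) * ((N:ℝ)/2)^2 := by
          field_simp; ring
      _ ≤ _ := this
  have hsum : (gam p j J / N) * Complex.normSq (D j J x) ≤ h p j x := by
    apply Finset.single_le_sum (f := fun J' => (gam p j J' / NN j J') * Complex.normSq (D j J' x))
    · intro i _
      have := gam_nonneg p j i
      have := Complex.normSq_nonneg (D j i x)
      positivity
    · exact Finset.mem_Icc.mpr ⟨hJ1, hJj⟩
  have heq : gam p j J * (N:ℝ) / 4 = 1 / (4 * (j:ℝ)) * (2:ℝ) ^ (-(((J:ℝ) - j + 1) / p)) := by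
    have hNne : (N:ℝ) ≠ 0 := ne_of_gt hNpos
    unfold gam
    rw [show -(((J:ℝ) - j + 1) / p) = ((j:ℝ) - J - 1) / p by ring, ← hN,
      div_mul_cancel₀ _ hNne]
    ring
  linarith

lemma D_cont (j J : ℕ) : Continuous (D j J) := by
  apply continuous_finset_sum
  intro k _
  fun_prop

lemma abs_D_le (j J : ℕ) (x : ℝ) : ‖D j J x‖ ≤ NN j J := by
  unfold D
  calc ‖∑ k ∈ Finset.range (NN j J), Complex.exp _‖
      ≤ ∑ k ∈ Finset.range (NN j J), ‖
        (Complex.exp (((2 * π * k * (2 ^ (J - 1) * x - 1/2) : ℝ)) * Complex.I))‖ := by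
        exact norm_sum_le _ _
    _ = ∑ k ∈ Finset.range (NN j J), 1 := by
        exact Finset.sum_congr rfl fun k _ => Complex.norm_exp_ofReal_mul_I _
    _ = NN j J := by simp

lemma normSq_D_le (j J : ℕ) (x : ℝ) : Complex.normSq (D j J x) ≤ ((NN j J : ℝ))^2 := by
  rw [← Complex.sq_norm]
  have h := abs_D_le j J x
  have := norm_nonneg (D j J x)
  nlinarith

lemma int_normSq_D {j J : ℕ} : ∫ x in (0:ℝ)..1, (Complex.normSq (D j J x) : ℝ) = NN j J := by
  set N := NN j J with hN
  set cc : ℕ → ℕ → ℂ := fun k l => Complex.exp (((-(π * ((k:ℝ) - l)) : ℝ)) * Complex.I) with hcc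
  set dd : ℕ → ℕ → ℝ := fun k l => 2 * π * 2 ^ (J-1) * ((k:ℝ) - l) with hdd
  have hc : ∀ k l : ℕ, Continuous (fun x : ℝ => cc k l * Complex.exp ((dd k l : ℝ) * Complex.I * (x:ℂ))) := by
    intro k l; fun_prop
  have hI : ∀ k l : ℕ, IntervalIntegrable
      (fun x : ℝ => cc k l * Complex.exp ((dd k l : ℝ) * Complex.I * (x:ℂ)))
      MeasureTheory.volume 0 1 := fun k l => (hc k l).intervalIntegrable 0 1
  have key : ∫ x in (0:ℝ)..1, ((Complex.normSq (D j J x) : ℝ) : ℂ) = (N : ℂ) := by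
    have hpt : ∀ x : ℝ, ((Complex.normSq (D j J x) : ℝ) : ℂ)
        = ∑ k ∈ Finset.range N, ∑ l ∈ Finset.range N,
            cc k l * Complex.exp ((dd k l : ℝ) * Complex.I * (x:ℂ)) := by
      intro x
      rw [← Complex.mul_conj]
      unfold D
      rw [map_sum, Finset.sum_mul]
      refine Finset.sum_congr rfl fun k _ => ?_
      rw [Finset.mul_sum]
      refine Finset.sum_congr rfl fun l _ => ?_
      rw [← Complex.exp_conj, map_mul, Complex.conj_I, Complex.conj_ofReal]
      rw [← Complex.exp_add, hcc, hdd]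
      simp only
      rw [← Complex.exp_add]
      congr 1
      push_cast
      ring
    have hfun : (fun x : ℝ => ((Complex.normSq (D j J x) : ℝ) : ℂ))
        = fun (x : ℝ) => ∑ k ∈ Finset.range N, ∑ l ∈ Finset.range N,
            cc k l * Complex.exp ((dd k l : ℝ) * Complex.I * (x:ℂ)) := funext hpt
    rw [hfun]
    have h1 := intervalIntegral.integral_finset_sum (μ := MeasureTheory.volume) (a := 0) (b := 1)
      (s := Finset.range N)
      (f := fun k (x : ℝ) => ∑ l ∈ Finset.range N, cc k l * Complex.exp ((dd k l : ℝ) * Complex.I * (x:ℂ)))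
      (fun k _ => ((continuous_finset_sum _ (fun l _ => hc k l)).intervalIntegrable 0 1))
    rw [h1]
    have h2 : ∀ k ∈ Finset.range N,
        (∫ x in (0:ℝ)..1, ∑ l ∈ Finset.range N, cc k l * Complex.exp ((dd k l : ℝ) * Complex.I * (x:ℂ)))
        = ∑ l ∈ Finset.range N, ((if k = l then 1 else 0) : ℂ) := by
      intro k _
      rw [intervalIntegral.integral_finset_sum (fun l _ => hI k l)]
      refine Finset.sum_congr rfl fun l _ => ?_
      rw [intervalIntegral.integral_const_mul]
      by_cases hkl : k = l
      · subst hkl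
        simp [hcc, hdd]
      · rw [if_neg hkl]
        have hdne : ((dd k l : ℝ) : ℂ) * Complex.I ≠ 0 := by
          apply mul_ne_zero _ Complex.I_ne_zero
          rw [Complex.ofReal_ne_zero, hdd]
          simp only
          have hklr : ((k:ℝ) - l) ≠ 0 := by
            intro hcon
            exact hkl (by exact_mod_cast (by linarith : (k:ℝ) = l))
          have hpi := Real.pi_pos
          have h2p : (2:ℝ) ^ (J-1) > 0 := by positivity
          intro hcon
          apply hklr
          have : 2 * π * 2 ^ (J-1) ≠ 0 := by positivity
          exact (mul_eq_zero.mp hcon).resolve_left this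
        have hform : (fun x : ℝ => cc k l * Complex.exp ((dd k l : ℝ) * Complex.I * (x:ℂ)))
            = fun x : ℝ => cc k l * Complex.exp ((((dd k l : ℝ) : ℂ) * Complex.I) * (x:ℂ)) := rfl
        rw [integral_exp_mul_complex hdne]
        have h1' : ((dd k l : ℝ) : ℂ) * Complex.I * ((1:ℝ):ℂ)
            = ((((k:ℤ) - l) * 2 ^ (J-1) : ℤ) : ℂ) * (2 * ↑π * Complex.I) := by
          rw [hdd]; push_cast; ring
        rw [h1', Complex.exp_int_mul_two_pi_mul_I]
        simp
    rw [Finset.sum_congr rfl h2, Finset.sum_comm]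
    simp [Finset.sum_ite_eq, Finset.filter_true_of_mem (fun x (hx : x ∈ Finset.range N) => Finset.mem_range.mp hx)]
  have hor := intervalIntegral.integral_ofReal (f := fun x => (Complex.normSq (D j J x) : ℝ))
    (a := 0) (b := 1) (μ := MeasureTheory.volume)
  rw [hor] at key
  exact_mod_cast key

lemma BJ_le (p : ℝ) (hp : 1 < p) {j J : ℕ} (hj : 1 ≤ j) (hJ1 : 1 ≤ J) (hJj : J ≤ j) :
    ((j:ℝ) * (gam p j J / NN j J)) ^ p * ((((NN j J : ℝ))^2) ^ (p-1) * NN j J) ≤ 1 := by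
  have hp0 : (0:ℝ) < p := lt_trans zero_lt_one hp
  set n : ℝ := (NN j J : ℝ) with hn
  have hnpos : (0:ℝ) < n := by
    rw [hn]; exact_mod_cast Nat.pow_pos (by norm_num)
  have hj0 : ((j:ℝ)) ≠ 0 := by positivity
  set E : ℝ := (j : ℝ) - J - 1 with hE
  have hjg : (j:ℝ) * (gam p j J / NN j J) = (2:ℝ) ^ (E/p) / n ^ (2:ℝ) := by
    unfold gam
    rw [← hn, ← hE]
    rw [Real.rpow_two]
    field_simp
  have h2E : ((2:ℝ) ^ (E/p)) ^ p = (2:ℝ) ^ E := by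
    rw [← Real.rpow_mul (by norm_num), div_mul_cancel₀ _ (ne_of_gt hp0)]
  have hnn : (n ^ (2:ℝ)) ^ p = n ^ ((2:ℝ)*p) := by
    rw [← Real.rpow_mul hnpos.le]
  have hsq : (n:ℝ)^2 = n ^ (2:ℝ) := (Real.rpow_two n).symm
  calc ((j:ℝ) * (gam p j J / NN j J)) ^ p * ((((NN j J : ℝ))^2) ^ (p-1) * NN j J)
      = ((2:ℝ) ^ (E/p) / n ^ (2:ℝ)) ^ p * ((n ^ (2:ℝ)) ^ (p-1) * n) := by
        rw [hjg, ← hn, hsq]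
    _ = ((2:ℝ) ^ E / n ^ ((2:ℝ)*p)) * (n ^ ((2:ℝ)*(p-1)) * n ^ (1:ℝ)) := by
        rw [Real.div_rpow (by positivity) (by positivity), h2E, hnn,
          ← Real.rpow_mul hnpos.le, Real.rpow_one]
    _ = (2:ℝ) ^ E * n ^ ((2:ℝ)*(p-1) + 1 - (2:ℝ)*p) := by
        rw [← Real.rpow_add hnpos, div_mul_eq_mul_div, mul_div_assoc,
          ← Real.rpow_sub hnpos]
    _ = (2:ℝ) ^ E / n := by
        rw [show (2:ℝ)*(p-1) + 1 - (2:ℝ)*p = -1 by ring, Real.rpow_neg_one]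
        ring
    _ ≤ 1 := by
        rw [div_le_one hnpos]
        have hle : E ≤ ((j - 1 - J : ℕ) : ℝ) := by
          have : ((j:ℤ) - J - 1) ≤ ((j - 1 - J : ℕ) : ℤ) := by omega
          rw [hE]
          exact_mod_cast this
        calc (2:ℝ) ^ E ≤ (2:ℝ) ^ (((j - 1 - J : ℕ) : ℝ)) :=
              Real.rpow_le_rpow_of_exponent_le one_le_two hle
          _ = n := by
              rw [Real.rpow_natCast, hn, NN]
              push_cast
              ring

lemma int_F_pow_le (p : ℝ) (hp : 1 < p) (j J : ℕ) :
    ∫ x in (0:ℝ)..1, (Complex.normSq (D j J x)) ^ p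
      ≤ (((NN j J : ℝ))^2) ^ (p-1) * NN j J := by
  have hp0 : (0:ℝ) < p := lt_trans zero_lt_one hp
  have hFcont : Continuous (fun x : ℝ => Complex.normSq (D j J x)) :=
    Complex.continuous_normSq.comp (D_cont j J)
  have hFpcont : Continuous (fun x : ℝ => (Complex.normSq (D j J x)) ^ p) :=
    hFcont.rpow_const (fun x => Or.inr hp0.le)
  have hpt : ∀ x ∈ Set.Icc (0:ℝ) 1, (Complex.normSq (D j J x)) ^ p
      ≤ (((NN j J : ℝ))^2) ^ (p-1) * Complex.normSq (D j J x) := by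
    intro x _
    have hF0 : (0:ℝ) ≤ Complex.normSq (D j J x) := Complex.normSq_nonneg _
    calc (Complex.normSq (D j J x)) ^ p
        = (Complex.normSq (D j J x)) ^ (p-1) * (Complex.normSq (D j J x)) ^ (1:ℝ) := by
          rw [← Real.rpow_add' hF0 (by ring_nf; linarith : (p-1) + 1 ≠ 0)]
          norm_num
      _ ≤ (((NN j J : ℝ))^2) ^ (p-1) * Complex.normSq (D j J x) := by
          rw [Real.rpow_one]
          exact mul_le_mul_of_nonneg_right
            (Real.rpow_le_rpow hF0 (normSq_D_le j J x) (by linarith)) hF0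
  calc ∫ x in (0:ℝ)..1, (Complex.normSq (D j J x)) ^ p
      ≤ ∫ x in (0:ℝ)..1, (((NN j J : ℝ))^2) ^ (p-1) * Complex.normSq (D j J x) := by
        apply intervalIntegral.integral_mono_on (by norm_num)
          (hFpcont.intervalIntegrable 0 1)
          ((continuous_const.mul hFcont).intervalIntegrable 0 1) hpt
    _ = (((NN j J : ℝ))^2) ^ (p-1) * ∫ x in (0:ℝ)..1, Complex.normSq (D j J x) := by
        exact intervalIntegral.integral_const_mul _ _
    _ = (((NN j J : ℝ))^2) ^ (p-1) * NN j J := by rw [int_normSq_D]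

lemma int_h_pow_le (p : ℝ) (hp : 1 < p) {j : ℕ} (hj : 1 ≤ j) :
    ∫ x in (0:ℝ)..1, (h p j x) ^ p ≤ 1 := by
  have hp0 : (0:ℝ) < p := lt_trans zero_lt_one hp
  have hj0 : ((j:ℝ)) ≠ 0 := by positivity
  have hjpos : (0:ℝ) < j := by exact_mod_cast Nat.lt_of_lt_of_le Nat.zero_lt_one hj
  have hFcont : ∀ J, Continuous (fun x : ℝ => Complex.normSq (D j J x)) :=
    fun J => Complex.continuous_normSq.comp (D_cont j J)
  have hhcont : Continuous (h p j) :=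
    continuous_finset_sum _ (fun J _ => continuous_const.mul (hFcont J))
  have htcont : ∀ J, Continuous (fun x : ℝ =>
      (1/(j:ℝ)) * ((j:ℝ) * (gam p j J / NN j J * Complex.normSq (D j J x))) ^ p) :=
    fun J => continuous_const.mul ((continuous_const.mul (continuous_const.mul (hFcont J))).rpow_const
      (fun x => Or.inr hp0.le))
  have hterm_nonneg : ∀ J (x : ℝ), 0 ≤ (j:ℝ) * (gam p j J / NN j J * Complex.normSq (D j J x)) :=
    fun J x => mul_nonneg (Nat.cast_nonneg _)
      (mul_nonneg (div_nonneg (gam_nonneg p j J) (Nat.cast_nonneg _)) (Complex.normSq_nonneg _))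
  have hpt : ∀ x : ℝ, (h p j x) ^ p ≤ ∑ J ∈ Finset.Icc 1 j,
      (1/(j:ℝ)) * ((j:ℝ) * (gam p j J / NN j J * Complex.normSq (D j J x))) ^ p := by
    intro x
    have key := Real.rpow_arith_mean_le_arith_mean_rpow (Finset.Icc 1 j)
      (fun _ => 1/(j:ℝ))
      (fun J => (j:ℝ) * (gam p j J / NN j J * Complex.normSq (D j J x)))
      (fun i _ => by positivity)
      (by
        rw [Finset.sum_const, Nat.card_Icc]
        simp only [nsmul_eq_mul]
        rw [show j + 1 - 1 = j from rfl]
        field_simp)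
      (fun i _ => hterm_nonneg i x) hp.le
    have hwz : ∑ J ∈ Finset.Icc 1 j,
        (1/(j:ℝ)) * ((j:ℝ) * (gam p j J / NN j J * Complex.normSq (D j J x))) = h p j x := by
      unfold h
      refine Finset.sum_congr rfl fun J _ => ?_
      field_simp
    rw [hwz] at key
    exact key
  calc ∫ x in (0:ℝ)..1, (h p j x) ^ p
      ≤ ∫ x in (0:ℝ)..1, ∑ J ∈ Finset.Icc 1 j,
          (1/(j:ℝ)) * ((j:ℝ) * (gam p j J / NN j J * Complex.normSq (D j J x))) ^ p := by
        apply intervalIntegral.integral_mono_on (by norm_num)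
          ((hhcont.rpow_const (fun x => Or.inr hp0.le)).intervalIntegrable 0 1)
          ((continuous_finset_sum _ (fun J _ => htcont J)).intervalIntegrable 0 1)
          (fun x _ => hpt x)
    _ = ∑ J ∈ Finset.Icc 1 j, ∫ x in (0:ℝ)..1,
          (1/(j:ℝ)) * ((j:ℝ) * (gam p j J / NN j J * Complex.normSq (D j J x))) ^ p := by
        exact intervalIntegral.integral_finset_sum
          (fun J _ => (htcont J).intervalIntegrable 0 1)
    _ ≤ ∑ J ∈ Finset.Icc 1 j, (1/(j:ℝ)) := by
        apply Finset.sum_le_sum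
        intro J hJ
        obtain ⟨hJ1, hJj⟩ := Finset.mem_Icc.mp hJ
        have hcJ : (0:ℝ) ≤ (j:ℝ) * (gam p j J / NN j J) :=
          mul_nonneg (Nat.cast_nonneg _) (div_nonneg (gam_nonneg p j J) (Nat.cast_nonneg _))
        have hsplit : ∀ x : ℝ, ((j:ℝ) * (gam p j J / NN j J * Complex.normSq (D j J x))) ^ p
            = ((j:ℝ) * (gam p j J / NN j J)) ^ p * (Complex.normSq (D j J x)) ^ p := by
          intro x
          rw [show (j:ℝ) * (gam p j J / NN j J * Complex.normSq (D j J x))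
            = ((j:ℝ) * (gam p j J / NN j J)) * Complex.normSq (D j J x) by ring]
          exact Real.mul_rpow hcJ (Complex.normSq_nonneg _)
        calc ∫ x in (0:ℝ)..1,
              (1/(j:ℝ)) * ((j:ℝ) * (gam p j J / NN j J * Complex.normSq (D j J x))) ^ p
            = ∫ x in (0:ℝ)..1, (1/(j:ℝ)) * (((j:ℝ) * (gam p j J / NN j J)) ^ p
                * (Complex.normSq (D j J x)) ^ p) := by
              apply intervalIntegral.integral_congr
              intro x _
              exact congrArg (fun t => 1/(j:ℝ) * t) (hsplit x)
          _ = (1/(j:ℝ)) * (((j:ℝ) * (gam p j J / NN j J)) ^ p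
                * ∫ x in (0:ℝ)..1, (Complex.normSq (D j J x)) ^ p) := by
              rw [← intervalIntegral.integral_const_mul, ← intervalIntegral.integral_const_mul]
          _ ≤ (1/(j:ℝ)) * (((j:ℝ) * (gam p j J / NN j J)) ^ p
                * ((((NN j J : ℝ))^2) ^ (p-1) * NN j J)) := by
              apply mul_le_mul_of_nonneg_left _ (by positivity)
              exact mul_le_mul_of_nonneg_left (int_F_pow_le p hp j J)
                (Real.rpow_nonneg hcJ p)
          _ ≤ (1/(j:ℝ)) * 1 := by
              apply mul_le_mul_of_nonneg_left _ (by positivity)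
              exact BJ_le p hp hj hJ1 hJj
          _ = 1/(j:ℝ) := by ring
    _ = 1 := by
        rw [Finset.sum_const, Nat.card_Icc, show j + 1 - 1 = j from rfl, nsmul_eq_mul]
        field_simp

lemma two_pow_lt {j : ℕ} (hj : 1 ≤ j) : (2:ℤ) ^ j < (j:ℤ) * 2 ^ (j+1) := by
  have : (1 : ℤ) * 2 ^ j < j * 2 ^ (j + 1) := by
    apply mul_lt_mul' (by exact_mod_cast hj) (by
      exact pow_lt_pow_right₀ (by norm_num) (by omega)) (by positivity) (by positivity)
  simpa using this

lemma coef_zero (p : ℝ) {j : ℕ} (hj : 1 ≤ j) : coef p j 0 = 0 := by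
  unfold coef
  apply Finset.sum_eq_zero; intro J hJ
  apply Finset.sum_eq_zero; intro k hk
  apply Finset.sum_eq_zero; intro l hl
  rw [if_neg]
  intro hcon
  obtain ⟨hJ1, hJj⟩ := Finset.mem_Icc.mp hJ
  obtain ⟨h1, _⟩ := fr_bounds hJ1 hJj hk hl
  omega

end SatPoly

/-- Lemma 2.3: for `1 < p < ∞` and `j ≥ 1` there is a trigonometric polynomial `g_j`,
given by coefficients `a : ℤ → ℂ` supported in `[0, j·2^{j+1})`, with `‖g_j‖_{L^p(𝕋)} ≤ 1`,
such that for every `1 ≤ J ≤ j` and every `x` within distance `2^{-j}` of an odd multiple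
of `2^{-J}` there are `0 ≤ n₁ < n₂ < j·2^{j+1}` with
`|S_{n₂} g_j(x) − S_{n₁} g_j(x)| ≥ (1/(4j))·2^{−(J−j+1)/p}`. -/
theorem exists_saturating_polynomial (p : ℝ) (hp : 1 < p) (j : ℕ) (hj : 1 ≤ j) :
    ∃ a : ℤ → ℂ,
      (∀ m : ℤ, (m < 0 ∨ (j * 2 ^ (j + 1) : ℤ) ≤ m) → a m = 0) ∧
      ((∫ x in (0:ℝ)..1,
          (‖(∑ m ∈ Finset.Ico (0:ℤ) (j * 2 ^ (j + 1)),
            a m * Complex.exp (2 * π * Complex.I * m * x))‖) ^ p) ^ (1 / p) ≤ 1) ∧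
      (∀ J : ℕ, 1 ≤ J → J ≤ j → ∀ K : ℤ, Odd K → 0 ≤ K → K ≤ 2 ^ J - 1 →
        ∀ x : ℝ, |x - (K : ℝ) / 2 ^ J| ≤ 1 / 2 ^ j →
        ∃ n₁ n₂ : ℕ, n₁ < n₂ ∧ (n₂ : ℤ) < j * 2 ^ (j + 1) ∧
          (1 / (4 * j)) * (2:ℝ) ^ (-(((J:ℝ) - j + 1) / p)) ≤
            ‖((∑ m ∈ Finset.Icc (-(n₂:ℤ)) (n₂:ℤ), a m * Complex.exp (2 * π * Complex.I * m * x)) -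
               (∑ m ∈ Finset.Icc (-(n₁:ℤ)) (n₁:ℤ), a m * Complex.exp (2 * π * Complex.I * m * x)))‖) := by
  refine ⟨SatPoly.coef p j, fun m hm => SatPoly.coef_eq_zero p hj hm, ?_, ?_⟩
  · have hS : ∀ J ∈ Finset.Icc 1 j, ∀ k ∈ Finset.range (SatPoly.NN j J),
        ∀ l ∈ Finset.range (SatPoly.NN j J),
        SatPoly.fr j J k l ∈ Finset.Ico (0:ℤ) (j * 2 ^ (j + 1)) := by
      intro J hJ k hk l hl
      obtain ⟨hJ1, hJj⟩ := Finset.mem_Icc.mp hJ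
      obtain ⟨h1, h2⟩ := SatPoly.fr_bounds hJ1 hJj hk hl
      rw [Finset.mem_Ico]
      have := SatPoly.two_pow_lt hj
      omega
    have hcong : (fun x : ℝ => (‖(∑ m ∈ Finset.Ico (0:ℤ) (j * 2 ^ (j + 1)),
        SatPoly.coef p j m * Complex.exp (2 * π * Complex.I * m * x))‖) ^ p)
        = fun x : ℝ => (SatPoly.h p j x) ^ p := by
      funext x
      rw [SatPoly.sumA p j _ hS x, norm_mul, Complex.norm_real, Real.norm_eq_abs,
        Complex.norm_exp_ofReal_mul_I, mul_one, _root_.abs_of_nonneg (SatPoly.h_nonneg p j x)]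
    rw [hcong]
    have h1 := SatPoly.int_h_pow_le p hp hj
    have h0 : 0 ≤ ∫ x in (0:ℝ)..1, (SatPoly.h p j x) ^ p :=
      intervalIntegral.integral_nonneg (by norm_num)
        (fun x _ => Real.rpow_nonneg (SatPoly.h_nonneg p j x) p)
    exact Real.rpow_le_one h0 h1 (by positivity)
  · intro J hJ1 hJj K hK hK0 hK1 x hx
    refine ⟨0, 2 ^ j, Nat.pow_pos (by norm_num), ?_, ?_⟩
    · have := SatPoly.two_pow_lt hj
      push_cast
      omega
    · have hS2 : ∀ J' ∈ Finset.Icc 1 j, ∀ k ∈ Finset.range (SatPoly.NN j J'),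
          ∀ l ∈ Finset.range (SatPoly.NN j J'),
          SatPoly.fr j J' k l ∈ Finset.Icc (-((2 ^ j : ℕ) : ℤ)) ((2 ^ j : ℕ) : ℤ) := by
        intro J' hJ' k hk l hl
        obtain ⟨hJ1', hJj'⟩ := Finset.mem_Icc.mp hJ'
        obtain ⟨h1, h2⟩ := SatPoly.fr_bounds hJ1' hJj' hk hl
        rw [Finset.mem_Icc]
        push_cast
        omega
      rw [SatPoly.sumA p j _ hS2 x]
      have hzero : (∑ m ∈ Finset.Icc (-((0:ℕ):ℤ)) ((0:ℕ):ℤ),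
          SatPoly.coef p j m * Complex.exp (2 * π * Complex.I * m * x)) = 0 := by
        norm_num
        exact SatPoly.coef_zero p hj
      rw [hzero, sub_zero, norm_mul, Complex.norm_real, Real.norm_eq_abs, Complex.norm_exp_ofReal_mul_I,
        mul_one, _root_.abs_of_nonneg (SatPoly.h_nonneg p j x)]
      exact SatPoly.h_ge p hJ1 hJj K hK x hx
end

section
/- For β ∈ (0,1), δ ∈ (0,1), and K ≥ 2, there exist an integer k ≥ K, an arbitrarily large integer n, and a trigonometric polynomial P with spectrum in [0, 2n−1] such that ‖P‖_∞ ≤ 1 and log|S_n P(x)| ≥ (1−δ)β·log log n for every x in the union over 0 ≤ j < k of the intervals [j/k − 1/(2k·exp((log k)^β)), j/k + 1/(2k·exp((log k)^β))]. -/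
open Real Complex Finset

lemma geom_bound (z : ℂ) (hz1 : ‖z‖ = 1) (hz : z ≠ 1) (i : ℕ) :
    ‖(∑ j ∈ Finset.range i, z ^ j)‖ ≤ 2 / ‖(1 - z)‖ := by
  have hz0 : 0 < ‖(1 - z)‖ :=
    norm_pos_iff.mpr (sub_ne_zero.mpr (fun h => hz h.symm))
  have h1 : ‖(z - 1)‖ = ‖(1 - z)‖ := by
    rw [← norm_neg]; ring_nf
  rw [geom_sum_eq hz, norm_div, h1]
  gcongr
  calc ‖(z ^ i - 1)‖ ≤ ‖(z ^ i)‖ + ‖(1:ℂ)‖ :=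
        norm_sub_le _ _
    _ ≤ 2 := by rw [norm_pow, hz1]; norm_num

lemma abel_tail (z : ℂ) (hz1 : ‖z‖ = 1) (hz : z ≠ 1) {a b : ℕ} (ha : 1 ≤ a)
    (hab : a < b) :
    ‖(∑ j ∈ Finset.Ioc a b, z ^ j * ((j : ℂ))⁻¹)‖ ≤
      6 / (‖(1 - z)‖ * (a + 1)) := by
  have hz0 : 0 < ‖(1 - z)‖ :=
    norm_pos_iff.mpr (sub_ne_zero.mpr (fun h => hz h.symm))
  set B := 2 / ‖(1 - z)‖ with hBdef
  have hB0 : 0 ≤ B := by positivity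
  have hG : ∀ i : ℕ, ‖(∑ j ∈ Finset.range i, z ^ j)‖ ≤ B :=
    fun i => geom_bound z hz1 hz i
  have key := Finset.sum_Ioc_by_parts (fun i => ((i : ℂ))⁻¹) (fun i => z ^ i) hab
  simp only [smul_eq_mul] at key
  push_cast at key
  have hsum : (∑ j ∈ Finset.Ioc a b, z ^ j * ((j : ℂ))⁻¹)
      = ∑ j ∈ Finset.Ioc a b, ((j : ℂ))⁻¹ * z ^ j := by
    refine Finset.sum_congr rfl fun j _ => mul_comm _ _
  rw [hsum, key]
  have habs1 : ‖(((b : ℂ))⁻¹ * ∑ i ∈ Finset.range (b+1), z ^ i)‖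
      ≤ ((a : ℝ) + 1)⁻¹ * B := by
    rw [norm_mul, norm_inv, Complex.norm_natCast]
    apply mul_le_mul ?_ (hG _) (norm_nonneg _) (by positivity)
    rw [inv_le_inv₀ (by exact_mod_cast Nat.pos_of_ne_zero (by omega)) (by positivity)]
    exact_mod_cast hab
  have habs2 : ‖(((a : ℂ) + 1)⁻¹ * ∑ i ∈ Finset.range (a+1), z ^ i)‖
      ≤ ((a : ℝ) + 1)⁻¹ * B := by
    rw [norm_mul, norm_inv]
    apply mul_le_mul ?_ (hG _) (norm_nonneg _) (by positivity)
    apply le_of_eq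
    rw [show ((a:ℂ) + 1) = (((a:ℝ) + 1 : ℝ) : ℂ) by push_cast; ring, Complex.norm_real, Real.norm_eq_abs,
      _root_.abs_of_nonneg (by positivity)]
  have habs3 : ‖(∑ i ∈ Finset.Ioc a (b-1),
        (((i : ℂ) + 1)⁻¹ - ((i : ℂ))⁻¹) * ∑ j ∈ Finset.range (i+1), z ^ j)‖
      ≤ ((a : ℝ) + 1)⁻¹ * B := by
    refine le_trans (norm_sum_le _ _) ?_
    have hterm : ∀ i ∈ Finset.Ioc a (b-1),
        ‖((((i : ℂ) + 1)⁻¹ - ((i : ℂ))⁻¹) * ∑ j ∈ Finset.range (i+1), z ^ j)‖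
          ≤ ((i : ℝ)⁻¹ - ((i:ℝ)+1)⁻¹) * B := by
      intro i hi
      have hi1 : 1 ≤ i := le_trans ha (Finset.mem_Ioc.mp hi).1.le
      have hipos : (0:ℝ) < i := by exact_mod_cast hi1
      rw [norm_mul]
      apply mul_le_mul ?_ (hG _) (norm_nonneg _) ?_
      · have h2 : (((i : ℂ) + 1)⁻¹ - ((i : ℂ))⁻¹)
            = (((((i:ℝ)+1))⁻¹ - ((i:ℝ))⁻¹ : ℝ) : ℂ) := by push_cast; ring
        rw [h2, Complex.norm_real, Real.norm_eq_abs, abs_of_nonpos (by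
          rw [sub_nonpos]
          exact inv_anti₀ hipos (by linarith))]
        apply le_of_eq; ring
      · have : ((i:ℝ)+1)⁻¹ ≤ (i : ℝ)⁻¹ := inv_anti₀ hipos (by linarith)
        linarith
    refine le_trans (Finset.sum_le_sum hterm) ?_
    rw [← Finset.sum_mul]
    apply mul_le_mul ?_ (le_refl B) hB0 (by positivity)
    -- telescoping
    set t := b - 1 + 1 - (a+1) with ht
    have hrw : ∑ i ∈ Finset.Ioc a (b-1), ((i : ℝ)⁻¹ - ((i:ℝ)+1)⁻¹)
        = ∑ i ∈ Finset.range t, ((((a+1+i : ℕ)) : ℝ)⁻¹ - (((a+1+(i+1) : ℕ)) : ℝ)⁻¹) := by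
      rw [← Finset.Ico_add_one_add_one_eq_Ioc, Finset.sum_Ico_eq_sum_range]
      refine Finset.sum_congr rfl fun i _ => by push_cast; ring_nf
    rw [hrw, Finset.sum_range_sub' (fun i => (((a+1+i : ℕ) : ℝ))⁻¹) t]
    have h0 : (0:ℝ) ≤ (((a+1+t : ℕ) : ℝ))⁻¹ := by positivity
    push_cast
    push_cast at h0
    simp only [add_zero]
    linarith
  calc ‖((((b : ℂ))⁻¹ * ∑ i ∈ Finset.range (b+1), z ^ i)
          - (((a : ℂ) + 1)⁻¹ * ∑ i ∈ Finset.range (a+1), z ^ i)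
          - ∑ i ∈ Finset.Ioc a (b-1),
              (((i : ℂ) + 1)⁻¹ - ((i : ℂ))⁻¹) * ∑ j ∈ Finset.range (i+1), z ^ j)‖
      ≤ ((a : ℝ) + 1)⁻¹ * B + ((a : ℝ) + 1)⁻¹ * B + ((a : ℝ) + 1)⁻¹ * B := by
        refine le_trans (norm_sub_le _ _) ?_
        refine le_trans (add_le_add (norm_sub_le _ _) (le_refl _)) ?_
        exact add_le_add (add_le_add habs1 habs2) habs3
    _ = 6 / (‖(1 - z)‖ * (a + 1)) := by
        rw [hBdef]; field_simp; ring

lemma exp_sub_exp (w : ℂ) :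
    Complex.exp (w * I) - Complex.exp (-(w * I)) = 2 * I * Complex.sin w := by
  rw [Complex.sin]
  have h := Complex.I_sq
  field_simp
  ring_nf
  rw [Complex.I_sq]
  ring

lemma one_sub_exp_abs (s : ℝ) :
    ‖(1 - Complex.exp ((2*π*s : ℝ) * I))‖ = 2 * |Real.sin (π*s)| := by
  have k1 : Complex.exp ((2*π*s : ℝ) * I) - 1
      = Complex.exp ((π*s : ℝ) * I) *
        (Complex.exp ((π*s : ℝ) * I) - Complex.exp (-(((π*s : ℝ) : ℂ) * I))) := by
    rw [mul_sub, ← Complex.exp_add, ← Complex.exp_add,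
      show ((π*s : ℝ) : ℂ) * I + ((π*s : ℝ) : ℂ) * I = ((2*π*s : ℝ) : ℂ) * I by
        push_cast; ring,
      show ((π*s : ℝ) : ℂ) * I + -(((π*s : ℝ) : ℂ) * I) = 0 by ring,
      Complex.exp_zero]
  rw [show (1 : ℂ) - Complex.exp ((2*π*s : ℝ) * I)
      = -(Complex.exp ((2*π*s : ℝ) * I) - 1) by ring, norm_neg, k1, exp_sub_exp,
    norm_mul, Complex.norm_exp_ofReal_mul_I, one_mul, norm_mul, norm_mul, Complex.norm_two,
    Complex.norm_I, ← Complex.ofReal_sin, Complex.norm_real, Real.norm_eq_abs]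
  ring

lemma core_bound (M : ℕ) (s : ℝ) (hs0 : 0 < s) (hs2 : s ≤ 1/2) :
    |∑ j ∈ Finset.Icc 1 M, Real.sin (2*π*j*s)/j| ≤ 2*π + 2 := by
  have hπ := Real.pi_pos
  set f := ⌊1/s⌋₊ with hf
  have hf1 : 1 ≤ f := Nat.le_floor (by
    rw [Nat.cast_one, le_div_iff₀ hs0]; linarith)
  have hfle : (f : ℝ) ≤ 1/s := Nat.floor_le (by positivity)
  have hflt : 1/s < (f : ℝ) + 1 := Nat.lt_floor_add_one _
  set M₀ := min M f with hM₀
  have hM₀M : M₀ ≤ M := min_le_left _ _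
  have hsplit : ∑ j ∈ Finset.Icc 1 M, Real.sin (2*π*j*s)/j
      = (∑ j ∈ Finset.Ioc 0 M₀, Real.sin (2*π*j*s)/j)
        + ∑ j ∈ Finset.Ioc M₀ M, Real.sin (2*π*j*s)/j := by
    rw [Finset.sum_Ioc_consecutive _ (Nat.zero_le _) hM₀M, ← Finset.Icc_add_one_left_eq_Ioc, zero_add]
  have head : |∑ j ∈ Finset.Ioc 0 M₀, Real.sin (2*π*j*s)/j| ≤ 2*π := by
    refine le_trans (Finset.abs_sum_le_sum_abs _ _) ?_
    have : ∀ j ∈ Finset.Ioc 0 M₀, |Real.sin (2*π*j*s)/j| ≤ 2*π*s := by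
      intro j hj
      have hj1 : 1 ≤ j := (Finset.mem_Ioc.mp hj).1
      have hjpos : (0:ℝ) < j := by exact_mod_cast hj1
      rw [abs_div, _root_.abs_of_pos hjpos, div_le_iff₀ hjpos]
      refine le_trans (Real.abs_sin_le_abs) ?_
      rw [_root_.abs_of_nonneg (by positivity)]
      nlinarith
    refine le_trans (Finset.sum_le_sum this) ?_
    rw [Finset.sum_const, Nat.card_Ioc, Nat.sub_zero, nsmul_eq_mul]
    have hMf : (M₀ : ℝ) ≤ (f : ℝ) := Nat.cast_le.mpr (min_le_right M f)
    have : (M₀ : ℝ) ≤ 1/s := le_trans hMf hfle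
    calc (M₀ : ℝ) * (2*π*s) ≤ (1/s) * (2*π*s) := by
          nlinarith [mul_nonneg (by linarith : (0:ℝ) ≤ 1/s - M₀) (by positivity : (0:ℝ) ≤ 2*π*s)]
      _ = 2*π := by field_simp
  have tail : |∑ j ∈ Finset.Ioc M₀ M, Real.sin (2*π*j*s)/j| ≤ 2 := by
    rcases le_or_gt M M₀ with h | h
    · rw [Finset.Ioc_eq_empty (by omega)]
      simp
    · have hM₀f : M₀ = f := by
        rcases min_cases M f with ⟨h1, h2⟩ | ⟨h1, h2⟩ <;> omega
      set z := Complex.exp ((2*π*s : ℝ) * I) with hz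
      have habs1z : ‖(1 - z)‖ = 2 * Real.sin (π * s) := by
        rw [hz, one_sub_exp_abs, _root_.abs_of_nonneg]
        exact Real.sin_nonneg_of_nonneg_of_le_pi (by positivity) (by nlinarith)
      have hsin_lb : 4 * s ≤ 2 * Real.sin (π * s) := by
        have := Real.mul_le_sin (x := π * s) (by positivity) (by nlinarith)
        have h2 : 2/π * (π * s) = 2 * s := by field_simp
        rw [h2] at this; linarith
      have habs : ‖z‖ = 1 := Complex.norm_exp_ofReal_mul_I _
      have hzne : z ≠ 1 := by
        intro hcon
        rw [hcon] at habs1z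
        simp at habs1z
        nlinarith
      have him : ∑ j ∈ Finset.Ioc M₀ M, Real.sin (2*π*j*s)/j
          = (∑ j ∈ Finset.Ioc M₀ M, z ^ j * ((j : ℂ))⁻¹).im := by
        rw [Complex.im_sum]
        refine Finset.sum_congr rfl fun j hj => ?_
        rw [hz, ← Complex.exp_nat_mul,
          show (j : ℂ) * (((2*π*s : ℝ)) * I) = ((2*π*j*s : ℝ)) * I by push_cast; ring,
          show ((j:ℂ))⁻¹ = (((j:ℝ)⁻¹ : ℝ) : ℂ) by push_cast; ring]
        rw [Complex.mul_im, Complex.ofReal_im, Complex.ofReal_re,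
          Complex.exp_ofReal_mul_I_im]
        simp [div_eq_mul_inv]
      rw [him]
      refine le_trans (Complex.abs_im_le_norm _) ?_
      refine le_trans (abel_tail z habs hzne (hM₀f ▸ hf1) h) ?_
      rw [habs1z]
      have hd1 : (0:ℝ) < 2 * Real.sin (π*s) := by linarith
      have hd2 : 1 ≤ s * (M₀ + 1) := by
        rw [hM₀f]
        calc (1:ℝ) = s * (1/s) := by field_simp
          _ ≤ s * (f + 1) := by nlinarith
      calc 6 / (2 * Real.sin (π*s) * (M₀ + 1)) ≤ 6 / (4*s * (M₀+1)) := by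
            apply div_le_div_of_nonneg_left (by norm_num) (by positivity)
            have : (0:ℝ) < (M₀:ℝ) + 1 := by positivity
            nlinarith
        _ ≤ 2 := by
            rw [div_le_iff₀ (by positivity)]
            nlinarith
  calc |∑ j ∈ Finset.Icc 1 M, Real.sin (2*π*j*s)/j|
      ≤ |∑ j ∈ Finset.Ioc 0 M₀, Real.sin (2*π*j*s)/j|
        + |∑ j ∈ Finset.Ioc M₀ M, Real.sin (2*π*j*s)/j| := by
        rw [hsplit]; exact abs_add_le _ _
    _ ≤ 2*π + 2 := add_le_add head tail

lemma sinsum_bound (M : ℕ) (x : ℝ) :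
    |∑ j ∈ Finset.Icc 1 M, Real.sin (2*π*j*x)/j| ≤ 2*π + 2 := by
  have hπ := Real.pi_pos
  set s := Int.fract x with hs
  have hxs : x = s + ⌊x⌋ := by rw [hs, Int.fract]; ring
  have hred : ∑ j ∈ Finset.Icc 1 M, Real.sin (2*π*j*x)/j
      = ∑ j ∈ Finset.Icc 1 M, Real.sin (2*π*j*s)/j := by
    refine Finset.sum_congr rfl fun j hj => ?_
    congr 1
    rw [show 2*π*j*x = 2*π*j*s + (j * ⌊x⌋ : ℤ) * (2*π) by
      have h := Int.self_sub_fract x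
      push_cast
      linear_combination (2*π*(j:ℝ)) * h]
    exact Real.sin_add_int_mul_two_pi _ _
  rw [hred]
  have hs0 : 0 ≤ s := Int.fract_nonneg x
  have hs1 : s < 1 := Int.fract_lt_one x
  rcases eq_or_lt_of_le hs0 with heq | hpos
  · simp [← heq]
    positivity
  rcases le_or_gt s (1/2) with hle | hgt
  · exact core_bound M s hpos hle
  · -- use t = 1 - s
    have hneg : ∑ j ∈ Finset.Icc 1 M, Real.sin (2*π*j*s)/j
        = -∑ j ∈ Finset.Icc 1 M, Real.sin (2*π*j*(1-s))/j := by
      rw [← Finset.sum_neg_distrib]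
      refine Finset.sum_congr rfl fun j hj => ?_
      rw [← neg_div, ← Real.sin_int_mul_two_pi_sub (2*π*j*(1-s)) j]
      congr 2
      push_cast; ring
    rw [hneg, abs_neg]
    exact core_bound M (1-s) (by linarith) (by linarith)

lemma residual_lower (m : ℕ) (s : ℝ) (hsm : 2*π*m*|s| ≤ 1/2) :
    ((harmonic m : ℝ)) - 1 ≤
      ‖(∑ j ∈ Finset.Icc 1 m, Complex.exp (((-(2*π*j*s)) : ℝ) * I) * ((j:ℂ))⁻¹)‖ := by
  have hπ := Real.pi_pos
  set A : ℂ := ∑ j ∈ Finset.Icc 1 m, ((j:ℂ))⁻¹ with hA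
  set B : ℂ := ∑ j ∈ Finset.Icc 1 m,
      (Complex.exp (((-(2*π*j*s)) : ℝ) * I) - 1) * ((j:ℂ))⁻¹ with hB
  have hsum : ∑ j ∈ Finset.Icc 1 m, Complex.exp (((-(2*π*j*s)) : ℝ) * I) * ((j:ℂ))⁻¹
      = A + B := by
    rw [hA, hB, ← Finset.sum_add_distrib]
    refine Finset.sum_congr rfl fun j hj => by ring
  have hAval : ‖A‖ = (harmonic m : ℝ) := by
    have : A = (((harmonic m : ℝ)) : ℂ) := by
      rw [hA, harmonic_eq_sum_Icc]
      push_cast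
      rfl
    rw [this, Complex.norm_real, Real.norm_eq_abs, _root_.abs_of_nonneg (by
      rcases Nat.eq_zero_or_pos m with h0|h0
      · simp [h0, harmonic_zero]
      · exact_mod_cast (harmonic_pos (Nat.pos_iff_ne_zero.mp h0)).le)]
  have hBval : ‖B‖ ≤ 1 := by
    refine le_trans (norm_sum_le _ _) ?_
    have hterm : ∀ j ∈ Finset.Icc 1 m,
        ‖((Complex.exp (((-(2*π*j*s)) : ℝ) * I) - 1) * ((j:ℂ))⁻¹)‖
          ≤ 2 * (2*π*|s|) := by
      intro j hj
      obtain ⟨hj1, hjm⟩ := Finset.mem_Icc.mp hj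
      have hjpos : (0:ℝ) < j := by exact_mod_cast hj1
      have hjm' : (j:ℝ) ≤ m := by exact_mod_cast hjm
      have habsz : ‖((((-(2*π*j*s)) : ℝ)) * I)‖ = 2*π*j*|s| := by
        rw [norm_mul, Complex.norm_I, mul_one, Complex.norm_real, Real.norm_eq_abs, abs_neg]
        rw [abs_mul, _root_.abs_of_nonneg (by positivity : (0:ℝ) ≤ 2*π*(j:ℝ))]
      have hz1 : ‖((((-(2*π*j*s)) : ℝ)) * I)‖ ≤ 1 := by
        rw [habsz]
        have h1 : 2*π*(j:ℝ)*|s| ≤ 2*π*(m:ℝ)*|s| := by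
          nlinarith [mul_nonneg (mul_nonneg (by positivity : (0:ℝ) ≤ 2*π)
            (by linarith : (0:ℝ) ≤ (m:ℝ)-(j:ℝ))) (abs_nonneg s)]
        linarith
      rw [norm_mul, norm_inv]
      calc ‖(Complex.exp ((((-(2*π*j*s)) : ℝ)) * I) - 1)‖ * (‖((j:ℂ))‖)⁻¹
          ≤ (2 * (2*π*(j:ℝ)*|s|)) * ((j:ℝ))⁻¹ := by
            apply mul_le_mul ?_ ?_ (by positivity) (by positivity)
            · rw [← habsz]
              exact Complex.norm_exp_sub_one_le hz1
            · rw [Complex.norm_natCast]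
        _ = 2 * (2*π*|s|) := by field_simp
    refine le_trans (Finset.sum_le_sum hterm) ?_
    rw [Finset.sum_const, Nat.card_Icc, nsmul_eq_mul]
    have hcard : ((m + 1 - 1 : ℕ) : ℝ) = (m:ℝ) := by push_cast; ring
    rw [hcard]
    calc (m:ℝ) * (2 * (2*π*|s|)) = 2 * (2*π*(m:ℝ)*|s|) := by ring
      _ ≤ 1 := by linarith
  have htri : ‖A‖ - ‖B‖ ≤ ‖(A + B)‖ := by
    have h := norm_add_le (A + B) (-B)
    rw [add_neg_cancel_right, norm_neg] at h
    linarith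
  rw [hsum]
  rw [hAval] at htri
  linarith

lemma choose_k (β δ : ℝ) (hβ : β ∈ Set.Ioo (0:ℝ) 1) (hδ : δ ∈ Set.Ioo (0:ℝ) 1)
    (K N : ℕ) :
    ∃ k : ℕ, K ≤ k ∧ N ≤ k ∧ 1 ≤ Real.log k ∧
      108 * (Real.log k) ^ ((1-δ)*β) + 4 ≤ (Real.log k) ^ β ∧
      8 * π ≤ Real.exp ((Real.log k) ^ β / 2) := by
  obtain ⟨hβ0, hβ1⟩ := hβ
  obtain ⟨hδ0, hδ1⟩ := hδ
  set d := (1-δ)*β with hd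
  have hd0 : 0 < d := by nlinarith
  have hdβ : d < β := by nlinarith
  have hE : ∀ᶠ L : ℝ in Filter.atTop, 1 ≤ L ∧ 112 ≤ L ^ (β - d) ∧ 70 ≤ L ^ β := by
    refine (Filter.eventually_ge_atTop 1).and (Filter.Eventually.and ?_ ?_)
    · exact (tendsto_rpow_atTop (by linarith)).eventually_ge_atTop 112
    · exact (tendsto_rpow_atTop (by linarith)).eventually_ge_atTop 70
  have hlog : Filter.Tendsto (fun k : ℕ => Real.log k) Filter.atTop Filter.atTop :=
    Real.tendsto_log_atTop.comp tendsto_natCast_atTop_atTop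
  obtain ⟨k, hk1, hk2⟩ := ((hlog.eventually hE).and
    (Filter.eventually_ge_atTop (max K N))).exists
  obtain ⟨hL1, hL2, hL3⟩ := hk1
  refine ⟨k, le_trans (le_max_left _ _) hk2, le_trans (le_max_right _ _) hk2, hL1, ?_, ?_⟩
  · set L := Real.log k
    have hL0 : 0 < L := by linarith
    have hLd : 1 ≤ L ^ d := Real.one_le_rpow hL1 hd0.le
    have : L ^ β = L ^ d * L ^ (β - d) := by
      rw [← Real.rpow_add hL0]; ring_nf
    rw [this]
    nlinarith
  · set L := Real.log k
    have h52 : (70:ℝ) ≤ L ^ β := hL3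
    have hhalf : (35:ℝ) ≤ L ^ β / 2 := by linarith
    have := Real.add_one_le_exp (L ^ β / 2)
    have hπ4 : π ≤ 4 := by linarith [Real.pi_le_four]
    linarith

set_option maxHeartbeats 2000000 in
/-- Lemma 3.2: for `β, δ ∈ (0,1)` and `K ≥ 2` there exist `k ≥ K`, an arbitrarily large `n`,
and a trigonometric polynomial `P` with spectrum in `[0, 2n-1]`, `‖P‖_∞ ≤ 1`, such that
`log|S_n P(x)| ≥ (1−δ)β log log n` on the union of the intervals of half-length
`1/(2k exp((log k)^β))` centered at the points `j/k`, `0 ≤ j < k`. -/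
theorem exists_saturating_polynomial_continuous (β δ : ℝ) (hβ : β ∈ Set.Ioo (0:ℝ) 1)
    (hδ : δ ∈ Set.Ioo (0:ℝ) 1) (K : ℕ) (hK : 2 ≤ K) :
    ∀ N : ℕ, ∃ (k n : ℕ) (a : ℤ → ℂ), K ≤ k ∧ N ≤ n ∧
      (∀ m : ℤ, (m < 0 ∨ (2 * n : ℤ) ≤ m) → a m = 0) ∧
      (∀ x : ℝ, ‖(∑ m ∈ Finset.Ico (0:ℤ) (2 * n),
          a m * Complex.exp (2 * π * Complex.I * m * x))‖ ≤ 1) ∧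
      (∀ x : ℝ, (∃ j : ℕ, j < k ∧
          |x - (j : ℝ) / k| ≤ 1 / (2 * k * Real.exp ((Real.log k) ^ β))) →
        (1 - δ) * β * Real.log (Real.log n) ≤
          Real.log (‖(∑ m ∈ Finset.Icc (-(n:ℤ)) (n:ℤ),
            a m * Complex.exp (2 * π * Complex.I * m * x))‖)) := by
  intro N
  obtain ⟨hβ0, hβ1⟩ := hβ
  obtain ⟨hδ0, hδ1⟩ := hδ
  have hπ := Real.pi_pos
  obtain ⟨k, hkK, hkN, hL1, hcond, h8π⟩ := choose_k β δ ⟨hβ0, hβ1⟩ ⟨hδ0, hδ1⟩ K N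
  set L := Real.log k with hLdef
  set d := (1-δ)*β with hd
  have hd0 : 0 < d := by rw [hd]; nlinarith
  have hd1 : d ≤ 1 := by rw [hd]; nlinarith
  have hk2 : 2 ≤ k := le_trans hK hkK
  have hkpos : 0 < k := by omega
  have hkR : (1:ℝ) ≤ (k:ℝ) := by exact_mod_cast Nat.one_le_iff_ne_zero.mpr (by omega)
  set h := L ^ β / 2 with hh
  have hexp_pos : 0 < Real.exp h := Real.exp_pos _
  have hE24 : (24:ℝ) ≤ Real.exp h := by nlinarith [Real.pi_gt_three]
  set n₀ := ⌈Real.exp h⌉₊ with hn₀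
  have hn₀low : Real.exp h ≤ (n₀ : ℝ) := Nat.le_ceil _
  have hn₀up : (n₀ : ℝ) < Real.exp h + 1 := Nat.ceil_lt_add_one hexp_pos.le
  have hn₀2 : 2 ≤ n₀ := by
    have h1 : (1:ℝ) < Real.exp h := by linarith
    have := Nat.lt_ceil.mpr (show ((1:ℕ):ℝ) < Real.exp h by exact_mod_cast h1)
    omega
  set n := n₀ * k with hn
  have hnN : N ≤ n := le_trans hkN (Nat.le_mul_of_pos_left k (by omega))
  -- integer facts
  have hkz : (2:ℤ) ≤ (k:ℤ) := by exact_mod_cast hk2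
  have hn₀z : (2:ℤ) ≤ (n₀:ℤ) := by exact_mod_cast hn₀2
  have hnz : ((n:ℕ):ℤ) = (n₀:ℤ) * (k:ℤ) := by rw [hn]; push_cast; ring
  set c : ℕ → ℂ := fun j => (18 * Complex.I * j)⁻¹ with hc
  set p : ℕ → ℤ := fun j => ((n₀ : ℤ) + j) * k with hp
  set q : ℕ → ℤ := fun j => ((n₀ : ℤ) - j) * k with hq
  set a : ℤ → ℂ := fun m => ∑ j ∈ Finset.Icc 1 (n₀ - 1),
      ((if m = p j then c j else 0) + (if m = q j then -(c j) else 0)) with ha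
  clear_value L h d n₀ n c p q a
  have hjfacts : ∀ j ∈ Finset.Icc 1 (n₀-1), (1:ℤ) ≤ (j:ℤ) ∧ (j:ℤ) + 1 ≤ (n₀:ℤ) := by
    intro j hj
    obtain ⟨hj1, hj2⟩ := Finset.mem_Icc.mp hj
    constructor
    · exact_mod_cast hj1
    · have : j + 1 ≤ n₀ := by omega
      exact_mod_cast this
  have hp_range : ∀ j ∈ Finset.Icc 1 (n₀-1), 0 ≤ p j ∧ ((n:ℕ):ℤ) < p j ∧ p j < 2 * ((n:ℕ):ℤ) := by
    intro j hj
    obtain ⟨hj1, hj2⟩ := hjfacts j hj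
    simp only [hp, hnz]
    refine ⟨by nlinarith, by nlinarith, by nlinarith⟩
  have hq_range : ∀ j ∈ Finset.Icc 1 (n₀-1), 0 ≤ q j ∧ q j ≤ ((n:ℕ):ℤ) := by
    intro j hj
    obtain ⟨hj1, hj2⟩ := hjfacts j hj
    simp only [hq, hnz]
    exact ⟨mul_nonneg (by linarith) (by linarith),
      mul_le_mul_of_nonneg_right (by linarith) (by linarith)⟩
  have hnposz : (0:ℤ) < ((n:ℕ):ℤ) := by simp only [hnz]; positivity
  -- evaluation of the sums
  have heval : ∀ (S : Finset ℤ) (x : ℝ), ∑ m ∈ S, a m * Complex.exp (2*(π:ℂ)*Complex.I*(m:ℂ)*(x:ℂ))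
      = ∑ j ∈ Finset.Icc 1 (n₀-1),
        ((if p j ∈ S then c j * Complex.exp (2*(π:ℂ)*Complex.I*((p j : ℤ):ℂ)*(x:ℂ)) else 0)
         + (if q j ∈ S then -(c j) * Complex.exp (2*(π:ℂ)*Complex.I*((q j : ℤ):ℂ)*(x:ℂ)) else 0)) := by
    intro S x
    calc ∑ m ∈ S, a m * Complex.exp (2*(π:ℂ)*Complex.I*(m:ℂ)*(x:ℂ))
        = ∑ m ∈ S, ∑ j ∈ Finset.Icc 1 (n₀-1),
            ((if m = p j then c j * Complex.exp (2*(π:ℂ)*Complex.I*(m:ℂ)*(x:ℂ)) else 0)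
             + (if m = q j then -(c j) * Complex.exp (2*(π:ℂ)*Complex.I*(m:ℂ)*(x:ℂ)) else 0)) := by
          refine Finset.sum_congr rfl fun m _ => ?_
          simp only [ha]
          rw [Finset.sum_mul]
          refine Finset.sum_congr rfl fun j _ => ?_
          rw [add_mul, ite_mul, ite_mul, zero_mul]
      _ = ∑ j ∈ Finset.Icc 1 (n₀-1), ∑ m ∈ S,
            ((if m = p j then c j * Complex.exp (2*(π:ℂ)*Complex.I*(m:ℂ)*(x:ℂ)) else 0)
             + (if m = q j then -(c j) * Complex.exp (2*(π:ℂ)*Complex.I*(m:ℂ)*(x:ℂ)) else 0)) :=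
          Finset.sum_comm
      _ = _ := by
          refine Finset.sum_congr rfl fun j _ => ?_
          rw [Finset.sum_add_distrib,
            Finset.sum_ite_eq' S (p j)
              (fun m => c j * Complex.exp (2*(π:ℂ)*Complex.I*(m:ℂ)*(x:ℂ))),
            Finset.sum_ite_eq' S (q j)
              (fun m => -(c j) * Complex.exp (2*(π:ℂ)*Complex.I*(m:ℂ)*(x:ℂ)))]
  refine ⟨k, n, a, hkK, hnN, ?_, ?_, ?_⟩
  · -- vanishing
    intro m hm
    simp only [ha]
    apply Finset.sum_eq_zero
    intro j hj
    obtain ⟨hp0, _, hp2⟩ := hp_range j hj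
    obtain ⟨hq0, hq1⟩ := hq_range j hj
    rw [if_neg, if_neg, add_zero]
    · rintro rfl
      rcases hm with hm | hm <;> omega
    · rintro rfl
      rcases hm with hm | hm <;> omega
  · -- sup bound
    intro x
    rw [heval]
    have hterm : ∀ j ∈ Finset.Icc 1 (n₀-1),
        ((if p j ∈ Finset.Ico (0:ℤ) (2*(n:ℕ)) then
            c j * Complex.exp (2*(π:ℂ)*Complex.I*((p j : ℤ):ℂ)*(x:ℂ)) else 0)
         + (if q j ∈ Finset.Ico (0:ℤ) (2*(n:ℕ)) then
            -(c j) * Complex.exp (2*(π:ℂ)*Complex.I*((q j : ℤ):ℂ)*(x:ℂ)) else 0))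
        = Complex.exp (((2*π*n₀*k*x : ℝ):ℂ) * Complex.I)
            * ((Real.sin (2*π*j*(k*x)) / j : ℝ) : ℂ) / 9 := by
      intro j hj
      obtain ⟨hj1n, hj2n⟩ := Finset.mem_Icc.mp hj
      obtain ⟨hj1, hj2⟩ := hjfacts j hj
      obtain ⟨hp0, _, hp2⟩ := hp_range j hj
      obtain ⟨hq0, hq1⟩ := hq_range j hj
      rw [if_pos (Finset.mem_Ico.mpr ⟨hp0, hp2⟩), if_pos (Finset.mem_Ico.mpr ⟨hq0, by omega⟩)]
      have ep : 2*(π:ℂ)*Complex.I*((p j : ℤ):ℂ)*(x:ℂ)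
          = ((2*π*n₀*k*x : ℝ):ℂ)*Complex.I + ((2*π*j*(k*x) : ℝ):ℂ)*Complex.I := by
        simp only [hp]; push_cast; ring
      have eq' : 2*(π:ℂ)*Complex.I*((q j : ℤ):ℂ)*(x:ℂ)
          = ((2*π*n₀*k*x : ℝ):ℂ)*Complex.I + -(((2*π*j*(k*x) : ℝ):ℂ)*Complex.I) := by
        simp only [hq]; push_cast; ring
      rw [ep, eq', Complex.exp_add, Complex.exp_add]
      have key : Complex.exp (((2*π*j*(k*x) : ℝ):ℂ)*Complex.I)
          - Complex.exp (-(((2*π*j*(k*x) : ℝ):ℂ)*Complex.I))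
          = 2*Complex.I*((Real.sin (2*π*j*(k*x)) : ℝ):ℂ) := by
        rw [Complex.ofReal_sin]
        exact exp_sub_exp _
      have hjne : ((j:ℕ):ℂ) ≠ 0 := by
        simp only [ne_eq, Nat.cast_eq_zero]; omega
      simp only [hc]
      rw [Complex.ofReal_div]
      push_cast at key ⊢
      simp only [mul_inv, Complex.inv_I]
      linear_combination (18⁻¹ * (-Complex.I) * ((j:ℂ))⁻¹ *
        Complex.exp (2*(π:ℂ)*(n₀:ℂ)*(k:ℂ)*(x:ℂ)*Complex.I)) * key
        - (Complex.exp (2*(π:ℂ)*(n₀:ℂ)*(k:ℂ)*(x:ℂ)*Complex.I)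
          * Complex.sin (2*(π:ℂ)*(j:ℂ)*((k:ℂ)*(x:ℂ))) * ((j:ℂ))⁻¹ / 9) * Complex.I_sq
    rw [Finset.sum_congr rfl hterm]
    rw [← Finset.sum_div, ← Finset.mul_sum, ← Complex.ofReal_sum]
    rw [norm_div, norm_mul, Complex.norm_exp_ofReal_mul_I, one_mul, Complex.norm_real, Real.norm_eq_abs]
    have hF := sinsum_bound (n₀-1) (k*x)
    have h9 : ‖(9:ℂ)‖ = 9 := by norm_num
    rw [h9, div_le_one (by norm_num)]
    have : π < 3.15 := Real.pi_lt_d2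
    calc |∑ j ∈ Finset.Icc 1 (n₀-1), Real.sin (2*π*j*(k*x))/j| ≤ 2*π + 2 := hF
      _ ≤ 9 := by linarith
  · -- lower bound
    intro x hx
    obtain ⟨j₀, hj₀k, hxj⟩ := hx
    rw [heval]
    set s : ℝ := k*x - j₀ with hs
    have hterm : ∀ j ∈ Finset.Icc 1 (n₀-1),
        ((if p j ∈ Finset.Icc (-((n:ℕ):ℤ)) ((n:ℕ):ℤ) then
            c j * Complex.exp (2*(π:ℂ)*Complex.I*((p j : ℤ):ℂ)*(x:ℂ)) else 0)
         + (if q j ∈ Finset.Icc (-((n:ℕ):ℤ)) ((n:ℕ):ℤ) then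
            -(c j) * Complex.exp (2*(π:ℂ)*Complex.I*((q j : ℤ):ℂ)*(x:ℂ)) else 0))
        = (-(18*Complex.I)⁻¹ * Complex.exp (((2*π*n₀*k*x : ℝ):ℂ)*Complex.I))
            * (Complex.exp (((-(2*π*j*s)) : ℝ)*Complex.I) * ((j:ℕ):ℂ)⁻¹) := by
      intro j hj
      obtain ⟨hj1, hj2⟩ := hjfacts j hj
      obtain ⟨hp0, hpn, hp2⟩ := hp_range j hj
      obtain ⟨hq0, hq1⟩ := hq_range j hj
      have hpni : p j ∉ Finset.Icc (-((n:ℕ):ℤ)) ((n:ℕ):ℤ) := by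
        intro hmem
        have := (Finset.mem_Icc.mp hmem).2
        omega
      rw [if_neg hpni, if_pos (Finset.mem_Icc.mpr ⟨by omega, hq1⟩), zero_add]
      have eq1 : 2*(π:ℂ)*Complex.I*((q j : ℤ):ℂ)*(x:ℂ)
          = ((2*π*n₀*k*x : ℝ):ℂ)*Complex.I + (((-(2*π*j*s)) : ℝ):ℂ)*Complex.I
            + ((-(j*(j₀:ℕ)) : ℤ):ℂ)*(2*(π:ℂ)*Complex.I) := by
        simp only [hq, hs]; push_cast; ring
      rw [eq1, Complex.exp_add, Complex.exp_add, Complex.exp_int_mul_two_pi_mul_I, mul_one]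
      have hjne : ((j:ℕ):ℂ) ≠ 0 := by simp only [ne_eq, Nat.cast_eq_zero]; omega
      simp only [hc]
      field_simp
    rw [Finset.sum_congr rfl hterm, ← Finset.mul_sum]
    -- the inner sum
    set T := ∑ j ∈ Finset.Icc 1 (n₀-1),
        Complex.exp (((-(2*π*j*s)) : ℝ)*Complex.I) * ((j:ℕ):ℂ)⁻¹ with hT
    have hkpos' : (0:ℝ) < k := by positivity
    have hexpLβ : Real.exp (L^β) = Real.exp h * Real.exp h := by
      rw [← Real.exp_add]; congr 1; rw [hh]; ring
    rw [← hLdef] at hxj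
    have hsabs : |s| ≤ 1/(2*(Real.exp h * Real.exp h)) := by
      have hsk : s = k*(x - j₀/k) := by rw [hs]; field_simp
      rw [hsk, abs_mul, _root_.abs_of_nonneg hkpos'.le]
      calc (k:ℝ) * |x - j₀/k| ≤ k * (1/(2*k*Real.exp (L^β))) := by
            exact mul_le_mul_of_nonneg_left hxj hkpos'.le
        _ = 1/(2*(Real.exp h * Real.exp h)) := by
            rw [← hexpLβ]; field_simp
    have hsm : 2*π*((n₀-1:ℕ):ℝ)*|s| ≤ 1/2 := by
      have hc1 : ((n₀-1:ℕ):ℝ) ≤ Real.exp h + 1 := by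
        have : ((n₀-1:ℕ):ℝ) ≤ (n₀:ℝ) := by exact_mod_cast Nat.sub_le n₀ 1
        linarith
      have hEpos : (0:ℝ) < Real.exp h := hexp_pos
      have habs0 : 0 ≤ |s| := abs_nonneg s
      have hstep : 2*π*((n₀-1:ℕ):ℝ)*|s| ≤ 2*π*(Real.exp h + 1)*(1/(2*(Real.exp h * Real.exp h))) := by
        apply mul_le_mul ?_ hsabs habs0 (by positivity)
        have : (0:ℝ) ≤ 2*π := by positivity
        nlinarith
      refine le_trans hstep ?_
      have key2 : 2*π*(Real.exp h+1) ≤ Real.exp h * Real.exp h := by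
        nlinarith [hE24, h8π, hπ, sq_nonneg (Real.exp h - 8*π)]
      rw [mul_one_div, div_le_div_iff₀ (by positivity) (by norm_num)]
      nlinarith [key2, hEpos]
    have hTlow : ((harmonic (n₀-1) : ℝ)) - 1 ≤ ‖T‖ := by
      rw [hT]
      exact residual_lower (n₀-1) s hsm
    -- abs of the full sum
    simp only [norm_mul, norm_neg, norm_inv, Complex.norm_I,
      Complex.norm_exp_ofReal_mul_I, mul_one, one_mul]
    rw [show ‖(18:ℂ)‖ = 18 by norm_num]
    -- harmonic lower bound
    have hHar : h ≤ ((harmonic (n₀-1) : ℝ)) := by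
      have h1 := log_add_one_le_harmonic (n₀-1)
      rw [show n₀-1+1 = n₀ by omega] at h1
      have h2 : h ≤ Real.log n₀ := by
        rw [← Real.log_exp h]
        exact Real.log_le_log (Real.exp_pos h) hn₀low
      linarith
    -- numeric chain
    have hL0 : (0:ℝ) < L := by linarith
    have hLd1 : (1:ℝ) ≤ L^d := Real.one_le_rpow hL1 hd0.le
    have h3d : (3:ℝ)^d ≤ 3 := by
      calc (3:ℝ)^d ≤ (3:ℝ)^(1:ℝ) := Real.rpow_le_rpow_of_exponent_le (by norm_num) hd1
        _ = 3 := Real.rpow_one 3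
    have hmulr : ((3:ℝ)*L)^d = 3^d * L^d := Real.mul_rpow (by norm_num) hL0.le
    have habsS1 : ((3:ℝ)*L)^d ≤ 18⁻¹ * ‖T‖ := by
      have e1 : ((3:ℝ)*L)^d ≤ 3 * L^d := by
        rw [hmulr]
        exact mul_le_mul_of_nonneg_right h3d (by positivity)
      have e2 : (3:ℝ) * L^d ≤ (h - 1)/18 := by
        rw [hh]
        nlinarith [hcond]
      have e3 : (h-1)/18 ≤ 18⁻¹ * ‖T‖ := by
        rw [inv_eq_one_div, div_mul_eq_mul_div, one_mul, div_le_div_iff₀ (by norm_num) (by norm_num)]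
        nlinarith [hTlow, hHar]
      linarith
    -- log n bounds
    have hn₀pos : (0:ℝ) < (n₀:ℝ) := by
      have : (0:ℕ) < n₀ := by omega
      exact_mod_cast this
    have hnR : ((n:ℕ):ℝ) = (n₀:ℝ)*(k:ℝ) := by rw [hn]; push_cast; ring
    have hlogn : Real.log n = Real.log n₀ + L := by
      rw [hnR, Real.log_mul (ne_of_gt hn₀pos) (by positivity), hLdef]
    have hlogn₀ : Real.log n₀ ≤ h + 1 := by
      have hub : (n₀:ℝ) ≤ Real.exp (h+1) := by
        have hexp1 : (2:ℝ) ≤ Real.exp 1 := by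
          have := Real.add_one_le_exp 1
          linarith
        have h1 : (1:ℝ) ≤ Real.exp h := by linarith
        have : Real.exp (h+1) = Real.exp h * Real.exp 1 := by rw [← Real.exp_add]
        nlinarith
      calc Real.log n₀ ≤ Real.log (Real.exp (h+1)) := Real.log_le_log hn₀pos hub
        _ = h + 1 := Real.log_exp _
    have hhL2 : h ≤ L/2 := by
      rw [hh]
      have : L^β ≤ L^(1:ℝ) := Real.rpow_le_rpow_of_exponent_le hL1 hβ1.le
      rw [Real.rpow_one] at this
      linarith
    have hlogn_ub : Real.log n ≤ 3*L := by
      rw [hlogn]; linarith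
    have hlogn_lb : (1:ℝ) ≤ Real.log n := by
      have : (0:ℝ) ≤ Real.log n₀ := Real.log_nonneg (by exact_mod_cast (by omega : 1 ≤ n₀))
      rw [hlogn]; linarith
    have habsS2 : (Real.log n)^d ≤ ((3:ℝ)*L)^d :=
      Real.rpow_le_rpow (by linarith) hlogn_ub hd0.le
    have hpow_pos : (0:ℝ) < (Real.log n)^d := Real.rpow_pos_of_pos (by linarith) d
    calc d * Real.log (Real.log n) = Real.log ((Real.log n)^d) :=
        (Real.log_rpow (by linarith) d).symm
      _ ≤ Real.log (18⁻¹ * ‖T‖) :=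
        Real.log_le_log hpow_pos (le_trans habsS2 habsS1)
end
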